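/- arXiv:0909.2120 — 4 statements merged into one kernel-verified Lean document; each statement's English description precedes it below -/
import Mathlib

section
/- Let d ≥ 2, x ∈ [0,1], and let (X^N)_N be an approximate x-maximizer for the neural complexity. Let y ∈ (0,1) and set k_N := ⌊yN⌋. For every ε > 0 there is N_0 such that for all N ≥ N_0 the following holds, with at most ε·C(N,k_N) exceptional subsets S ⊆ {1,…,N} of cardinality k_N: (i) if y ≤ x, then 1 − ε ≤ H(X^N_S)/(|S| log d) ≤ 1; (ii) if y ≥ x, then 0 ≤ H(X^N | X^N_S)/(N log d) ≤ ε. -/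
open Filter

noncomputable def entropy {α : Type*} [Fintype α] (p : α → ℝ) : ℝ :=
  -∑ x, p x * Real.log (p x)

def IsPMF {α : Type*} [Fintype α] (p : α → ℝ) : Prop :=
  (∀ x, 0 ≤ p x) ∧ ∑ x, p x = 1

noncomputable def margin {d N : ℕ} (μ : (Fin N → Fin d) → ℝ) (S : Finset (Fin N)) :
    (({ i // i ∈ S }) → Fin d) → ℝ :=
  fun y => ∑ x : Fin N → Fin d, if ∀ i : { i // i ∈ S }, x i.1 = y i then μ x else 0

/-- Mutual information between `X_S` and `X_{Sᶜ}`. -/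
noncomputable def MIS {d N : ℕ} (μ : (Fin N → Fin d) → ℝ) (S : Finset (Fin N)) : ℝ :=
  entropy (margin μ S) + entropy (margin μ Sᶜ) - entropy μ

/-- The Edelman–Sporns–Tononi neural complexity. -/
noncomputable def neural {d N : ℕ} (μ : (Fin N → Fin d) → ℝ) : ℝ :=
  (1 / (N + 1 : ℝ)) * ∑ S : Finset (Fin N), (1 / (N.choose S.card : ℝ)) * MIS μ S

noncomputable def avgEntropy {d N : ℕ} (μ : (Fin N → Fin d) → ℝ) (k : ℕ) : ℝ :=
  (1 / (N.choose k : ℝ)) *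
    ∑ S ∈ Finset.powersetCard k (Finset.univ : Finset (Fin N)), entropy (margin μ S)

/-- The entropy profile `h_X : [0,1] → [0,1]`, piecewise affine interpolation of
`k/N ↦ (average entropy of subsystems of size k)/(N log d)`. -/
noncomputable def profile {d N : ℕ} (μ : (Fin N → Fin d) → ℝ) (t : ℝ) : ℝ :=
  if t ≤ 0 then 0 else
    (avgEntropy μ (⌈t * N⌉.toNat - 1)
      + (t * N - ((⌈t * N⌉.toNat - 1 : ℕ) : ℝ)) *
        (avgEntropy μ ⌈t * N⌉.toNat - avgEntropy μ (⌈t * N⌉.toNat - 1)))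
      / (N * Real.log d)

open scoped Classical


noncomputable def push {α β : Type*} [Fintype α] (f : α → β) (p : α → ℝ) : β → ℝ :=
  fun y => ∑ x, if f x = y then p x else 0

set_option linter.unusedSectionVars false
variable {α β γ : Type*} [Fintype α] [Fintype β] [Fintype γ]

lemma push_nonneg (f : α → β) {p : α → ℝ} (hp : ∀ x, 0 ≤ p x) (y : β) : 0 ≤ push f p y := by
  apply Finset.sum_nonneg; intro x _; split <;> simp [hp x]

lemma sum_push_mul (f : α → β) (p : α → ℝ) (g : β → ℝ) :
    ∑ y, push f p y * g y = ∑ x, p x * g (f x) := by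
  unfold push
  simp only [Finset.sum_mul, ite_mul, zero_mul]
  rw [Finset.sum_comm]
  apply Finset.sum_congr rfl
  intro x _
  simp

lemma sum_push (f : α → β) (p : α → ℝ) : ∑ y, push f p y = ∑ x, p x := by
  have := sum_push_mul f p (fun _ => 1)
  simpa using this

lemma le_push (f : α → β) {p : α → ℝ} (hp : ∀ x, 0 ≤ p x) (x : α) : p x ≤ push f p (f x) := by
  unfold push
  have : p x = if f x = f x then p x else 0 := by simp
  rw [this]
  apply Finset.single_le_sum (f := fun x' => if f x' = f x then p x' else 0)
  · intro x' _; split <;> simp [hp x']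
  · exact Finset.mem_univ x

lemma push_comp (f : α → β) (g : β → γ) (p : α → ℝ) :
    push g (push f p) = push (g ∘ f) p := by
  funext z
  unfold push
  have h : ∀ y : β, (if g y = z then (∑ x, if f x = y then p x else 0) else 0)
      = ∑ x, if f x = y then (if g y = z then p x else 0) else 0 := by
    intro y
    by_cases hgy : g y = z <;> simp [hgy]
  simp only [Function.comp_apply]
  rw [Finset.sum_congr rfl (fun y _ => h y)]
  rw [Finset.sum_comm]
  apply Finset.sum_congr rfl
  intro x _
  rw [Finset.sum_ite_eq]
  simp

lemma push_id (p : α → ℝ) : push id p = p := by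
  funext y; unfold push; simp

lemma entropy_nonneg {p : α → ℝ} (hp : IsPMF p) : 0 ≤ entropy p := by
  unfold entropy
  rw [neg_nonneg]
  apply Finset.sum_nonpos
  intro x _
  rcases eq_or_lt_of_le (hp.1 x) with h | h
  · simp [← h]
  · have h1 : p x ≤ 1 := by
      rw [← hp.2]
      exact Finset.single_le_sum (fun i _ => hp.1 i) (Finset.mem_univ x)
    have hl := Real.log_nonpos (le_of_lt h) h1
    nlinarith

lemma entropy_push_le (f : α → β) {p : α → ℝ} (hp : ∀ x, 0 ≤ p x) :
    entropy (push f p) ≤ entropy p := by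
  unfold entropy
  rw [neg_le_neg_iff]
  rw [sum_push_mul f p (fun y => Real.log (push f p y))]
  apply Finset.sum_le_sum
  intro x _
  rcases eq_or_lt_of_le (hp x) with h | h
  · simp [← h]
  · apply mul_le_mul_of_nonneg_left _ (le_of_lt h)
    exact Real.log_le_log h (le_push f hp x)

lemma entropy_le_push_add_log (f : α → β) {p : α → ℝ} (hp : IsPMF p) {c : ℕ}
    (hc1 : 1 ≤ c) (hc : ∀ y, (Finset.univ.filter (fun x => f x = y)).card ≤ c) :
    entropy p ≤ entropy (push f p) + Real.log c := by
  have hq : ∀ y, 0 ≤ push f p y := push_nonneg f hp.1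
  have hcR : (1:ℝ) ≤ (c:ℝ) := by exact_mod_cast hc1
  have key : ∑ x, (p x * Real.log (push f p (f x)) - p x * Real.log (p x))
      ≤ ∑ x, ((push f p (f x)) / c - p x + p x * Real.log c) := by
    apply Finset.sum_le_sum
    intro x _
    rcases eq_or_lt_of_le (hp.1 x) with h | h
    · rw [← h]
      simpa using div_nonneg (hq (f x)) (by positivity : (0:ℝ) ≤ (c:ℝ))
    · have hqx : 0 < push f p (f x) := lt_of_lt_of_le h (le_push f hp.1 x)
      have hlog : Real.log (push f p (f x) / (c * p x)) ≤ push f p (f x) / (c * p x) - 1 :=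
        Real.log_le_sub_one_of_pos (by positivity)
      have hexp : Real.log (push f p (f x) / (c * p x))
          = Real.log (push f p (f x)) - Real.log c - Real.log (p x) := by
        rw [Real.log_div (ne_of_gt hqx) (by positivity), Real.log_mul (by positivity) (ne_of_gt h)]
        ring
      rw [hexp] at hlog
      have := mul_le_mul_of_nonneg_left hlog (le_of_lt h)
      calc p x * Real.log (push f p (f x)) - p x * Real.log (p x)
          = p x * (Real.log (push f p (f x)) - Real.log c - Real.log (p x)) + p x * Real.log c := by ring
        _ ≤ p x * (push f p (f x) / (c * p x) - 1) + p x * Real.log c := by linarith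
        _ = push f p (f x) / c - p x + p x * Real.log c := by
            field_simp
  have hsum_qf : ∑ x, push f p (f x) ≤ (c:ℝ) := by
    have h1 : ∀ x : α, push f p (f x) = ∑ y, if f x = y then push f p y else 0 := by
      intro x; rw [Finset.sum_ite_eq]; simp
    have h2 : ∑ x, push f p (f x)
        = ∑ y, ((Finset.univ.filter (fun x => f x = y)).card : ℝ) * push f p y := by
      calc ∑ x, push f p (f x) = ∑ x, ∑ y, if f x = y then push f p y else 0 :=
            Finset.sum_congr rfl (fun x _ => h1 x)
        _ = ∑ y, ∑ x, if f x = y then push f p y else 0 := Finset.sum_comm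
        _ = ∑ y, ((Finset.univ.filter (fun x => f x = y)).card : ℝ) * push f p y := by
            apply Finset.sum_congr rfl; intro y _
            rw [← Finset.sum_filter, Finset.sum_const, nsmul_eq_mul]
    rw [h2]
    calc ∑ y, ((Finset.univ.filter (fun x => f x = y)).card : ℝ) * push f p y
        ≤ ∑ y, (c:ℝ) * push f p y := by
          apply Finset.sum_le_sum; intro y _
          exact mul_le_mul_of_nonneg_right (by exact_mod_cast hc y) (hq y)
      _ = (c:ℝ) * ∑ y, push f p y := by rw [Finset.mul_sum]
      _ = (c:ℝ) := by rw [sum_push, hp.2, mul_one]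
  have hepush : entropy (push f p) = -∑ x, p x * Real.log (push f p (f x)) := by
    unfold entropy
    rw [sum_push_mul f p (fun y => Real.log (push f p y))]
  unfold entropy at hepush ⊢
  rw [hepush]
  have hrhs : ∑ x, ((push f p (f x)) / c - p x + p x * Real.log c)
      = (∑ x, push f p (f x)) / c - 1 + Real.log c := by
    rw [Finset.sum_add_distrib, Finset.sum_sub_distrib, ← Finset.sum_div, ← Finset.sum_mul, hp.2]
    ring
  rw [hrhs] at key
  have hdiv : (∑ x, push f p (f x)) / c ≤ 1 := by
    rw [div_le_one (by positivity)]
    exact hsum_qf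
  have hsplit : ∑ x, (p x * Real.log (push f p (f x)) - p x * Real.log (p x))
      = ∑ x, p x * Real.log (push f p (f x)) - ∑ x, p x * Real.log (p x) :=
    Finset.sum_sub_distrib _ _
  linarith [key, hdiv, hsplit.symm.le, hsplit.le]

section Margin
variable {d N : ℕ}

/-- restriction map to a subset -/
def restr (S : Finset (Fin N)) : (Fin N → Fin d) → ({ i // i ∈ S } → Fin d) :=
  fun x i => x i.1

def restr2 {T S : Finset (Fin N)} (h : T ⊆ S) :
    ({ i // i ∈ S } → Fin d) → ({ i // i ∈ T } → Fin d) :=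
  fun z i => z ⟨i.1, h i.2⟩

lemma margin_eq_push (μ : (Fin N → Fin d) → ℝ) (S : Finset (Fin N)) :
    margin μ S = push (restr S) μ := by
  funext y
  unfold margin push restr
  apply Finset.sum_congr rfl
  intro x _
  congr 1
  simp only [eq_iff_iff]
  constructor
  · intro h; funext i; exact h i
  · intro h i; exact congrFun h i

lemma margin_comp {T S : Finset (Fin N)} (h : T ⊆ S) (μ : (Fin N → Fin d) → ℝ) :
    margin μ T = push (restr2 (d := d) h) (margin μ S) := by
  rw [margin_eq_push, margin_eq_push, push_comp]
  rfl

lemma margin_isPMF {μ : (Fin N → Fin d) → ℝ} (hμ : IsPMF μ) (S : Finset (Fin N)) :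
    IsPMF (margin μ S) := by
  rw [margin_eq_push]
  exact ⟨push_nonneg _ hμ.1, by rw [sum_push]; exact hμ.2⟩

lemma entropy_margin_le_entropy {μ : (Fin N → Fin d) → ℝ} (hμ : IsPMF μ) (S : Finset (Fin N)) :
    entropy (margin μ S) ≤ entropy μ := by
  rw [margin_eq_push]
  exact entropy_push_le _ hμ.1

lemma entropy_margin_mono {μ : (Fin N → Fin d) → ℝ} (hμ : IsPMF μ) {T S : Finset (Fin N)}
    (h : T ⊆ S) : entropy (margin μ T) ≤ entropy (margin μ S) := by
  rw [margin_comp h]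
  exact entropy_push_le _ (margin_isPMF hμ S).1

lemma entropy_margin_univ {μ : (Fin N → Fin d) → ℝ} (hμ : IsPMF μ) :
    entropy (margin μ (Finset.univ : Finset (Fin N))) = entropy μ := by
  apply le_antisymm (entropy_margin_le_entropy hμ _)
  have h1 : entropy μ = entropy (push (fun (z : { i // i ∈ (Finset.univ : Finset (Fin N)) } → Fin d) (i : Fin N) => z ⟨i, Finset.mem_univ i⟩) (margin μ Finset.univ)) := by
    rw [margin_eq_push, push_comp]
    have : ((fun (z : { i // i ∈ (Finset.univ : Finset (Fin N)) } → Fin d) (i : Fin N) => z ⟨i, Finset.mem_univ i⟩) ∘ restr Finset.univ) = id := rfl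
    rw [this, push_id]
  rw [h1]
  exact entropy_push_le _ (margin_isPMF hμ _).1

end Margin

lemma entropy_punit (p : PUnit.{1} → ℝ) (hp : ∑ u, p u = 1) : entropy p = 0 := by
  unfold entropy
  rw [Finset.sum_eq_single PUnit.unit (by intro b _ hb; exact absurd rfl hb) (by simp)]
  have : p PUnit.unit = 1 := by simpa using hp
  simp [this]

lemma entropy_le_log_card {α : Type*} [Fintype α] {p : α → ℝ} (hp : IsPMF p) :
    entropy p ≤ Real.log (Fintype.card α) := by
  have hne : 0 < Fintype.card α := by
    by_contra h
    push_neg at h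
    interval_cases h' : Fintype.card α
    have hie : IsEmpty α := Fintype.card_eq_zero_iff.mp h'
    have h2 := hp.2
    rw [Finset.univ_eq_empty, Finset.sum_empty] at h2
    norm_num at h2
  have := entropy_le_push_add_log (fun _ : α => PUnit.unit) hp (c := Fintype.card α) hne
    (fun y => by simpa using Finset.card_filter_le _ _)
  rwa [entropy_punit _ (by rw [sum_push]; exact hp.2), zero_add] at this

section Margin2
variable {d N : ℕ}

lemma entropy_margin_le_card_log {μ : (Fin N → Fin d) → ℝ} (hμ : IsPMF μ)
    (S : Finset (Fin N)) : entropy (margin μ S) ≤ S.card * Real.log d := by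
  have := entropy_le_log_card (margin_isPMF hμ S)
  have hcard : Fintype.card ({ i // i ∈ S } → Fin d) = d ^ S.card := by
    rw [Fintype.card_fun, Fintype.card_coe, Fintype.card_fin]
  rw [hcard, Nat.cast_pow, Real.log_pow] at this
  exact this

lemma entropy_margin_insert_le {μ : (Fin N → Fin d) → ℝ} (hμ : IsPMF μ) (hd : 1 ≤ d)
    {T : Finset (Fin N)} {a : Fin N} (ha : a ∉ T) :
    entropy (margin μ (insert a T)) ≤ entropy (margin μ T) + Real.log d := by
  have hsub : T ⊆ insert a T := Finset.subset_insert a T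
  have key := entropy_le_push_add_log (restr2 (d := d) hsub)
    (margin_isPMF hμ (insert a T)) (c := d) hd ?_
  · rwa [← margin_comp hsub] at key
  · intro y
    have : ∀ z ∈ Finset.univ.filter (fun z => restr2 (d := d) hsub z = y),
        ∀ z' ∈ Finset.univ.filter (fun z => restr2 (d := d) hsub z = y),
        z ⟨a, Finset.mem_insert_self a T⟩ = z' ⟨a, Finset.mem_insert_self a T⟩ → z = z' := by
      intro z hz z' hz' he
      simp only [Finset.mem_filter] at hz hz'
      funext i
      rcases Finset.mem_insert.mp i.2 with h | h
      · have : i = ⟨a, Finset.mem_insert_self a T⟩ := Subtype.ext h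
        rw [this]; exact he
      · have e1 : z i = restr2 (d := d) hsub z ⟨i.1, h⟩ := rfl
        have e2 : z' i = restr2 (d := d) hsub z' ⟨i.1, h⟩ := rfl
        rw [e1, e2, hz.2, hz'.2]
    have hle : (Finset.univ.filter (fun z => restr2 (d := d) hsub z = y)).card
        ≤ (Finset.univ : Finset (Fin d)).card :=
      Finset.card_le_card_of_injOn (fun z => z ⟨a, Finset.mem_insert_self a T⟩)
        (fun _ _ => Finset.mem_univ _) (fun z hz z' hz' => this z hz z' hz')
    simp only [Finset.card_univ, Fintype.card_fin] at hle
    convert hle using 2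
    exact Finset.filter_congr_decidable ..

end Margin2

lemma pair_sum {N : ℕ} (k : ℕ) (g : Finset (Fin N) → Fin N → ℝ) :
    ∑ T ∈ Finset.powersetCard (k+1) (Finset.univ : Finset (Fin N)), ∑ i ∈ T, g (T.erase i) i
    = ∑ S ∈ Finset.powersetCard k (Finset.univ : Finset (Fin N)), ∑ i ∈ Sᶜ, g S i := by
  rw [Finset.sum_sigma', Finset.sum_sigma']
  refine Finset.sum_bij' (fun p _ => (⟨p.1.erase p.2, p.2⟩ : Σ _ : Finset (Fin N), Fin N))
    (fun p _ => (⟨insert p.2 p.1, p.2⟩ : Σ _ : Finset (Fin N), Fin N)) ?_ ?_ ?_ ?_ ?_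
  · rintro ⟨T, i⟩ hp
    simp only [Finset.mem_sigma, Finset.mem_powersetCard_univ] at hp ⊢
    constructor
    · rw [Finset.card_erase_of_mem hp.2, hp.1]
      rfl
    · simp [Finset.mem_compl]
  · rintro ⟨S, i⟩ hp
    simp only [Finset.mem_sigma, Finset.mem_powersetCard_univ, Finset.mem_compl] at hp ⊢
    constructor
    · rw [Finset.card_insert_of_notMem hp.2, hp.1]
    · exact Finset.mem_insert_self _ _
  · rintro ⟨T, i⟩ hp
    simp only [Finset.mem_sigma, Finset.mem_powersetCard_univ] at hp
    simp [Finset.insert_erase hp.2]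
  · rintro ⟨S, i⟩ hp
    simp only [Finset.mem_sigma, Finset.mem_powersetCard_univ, Finset.mem_compl] at hp
    simp [Finset.erase_insert hp.2]
  · rintro ⟨T, i⟩ hp
    rfl

section Facts
variable {d N : ℕ}

noncomputable def Atot (μ : (Fin N → Fin d) → ℝ) (k : ℕ) : ℝ :=
  ∑ S ∈ Finset.powersetCard k (Finset.univ : Finset (Fin N)), entropy (margin μ S)

lemma avgEntropy_eq (μ : (Fin N → Fin d) → ℝ) (k : ℕ) :
    avgEntropy μ k = Atot μ k / (N.choose k : ℝ) := by
  unfold avgEntropy Atot; ring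

lemma Astep_left {μ : (Fin N → Fin d) → ℝ} (hμ : IsPMF μ) {k : ℕ} (hk : k < N) :
    ((N - k : ℕ) : ℝ) * Atot μ k ≤ ((k:ℝ) + 1) * Atot μ (k+1) := by
  have h1 : ((k:ℝ)+1) * Atot μ (k+1)
      = ∑ T ∈ Finset.powersetCard (k+1) (Finset.univ : Finset (Fin N)),
          ∑ _i ∈ T, entropy (margin μ T) := by
    unfold Atot
    rw [Finset.mul_sum]
    apply Finset.sum_congr rfl
    intro T hT
    rw [Finset.sum_const, (Finset.mem_powersetCard_univ.mp hT :  T.card = k+1), nsmul_eq_mul]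
    push_cast; ring
  have h2 : ((N - k : ℕ) : ℝ) * Atot μ k
      = ∑ S ∈ Finset.powersetCard k (Finset.univ : Finset (Fin N)),
          ∑ _i ∈ Sᶜ, entropy (margin μ S) := by
    unfold Atot
    rw [Finset.mul_sum]
    apply Finset.sum_congr rfl
    intro S hS
    rw [Finset.sum_const, Finset.card_compl, (Finset.mem_powersetCard_univ.mp hS : S.card = k),
      Fintype.card_fin, nsmul_eq_mul]
  rw [h1, h2, ← pair_sum k (fun S _ => entropy (margin μ S))]
  apply Finset.sum_le_sum
  intro T _
  apply Finset.sum_le_sum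
  intro i hi
  exact entropy_margin_mono hμ (Finset.erase_subset i T)

lemma Astep_right {μ : (Fin N → Fin d) → ℝ} (hμ : IsPMF μ) (hd : 1 ≤ d) {k : ℕ} (hk : k < N) :
    ((k:ℝ) + 1) * Atot μ (k+1)
      ≤ ((N - k : ℕ) : ℝ) * Atot μ k + ((N - k : ℕ) : ℝ) * (N.choose k : ℝ) * Real.log d := by
  have h1 : ((k:ℝ)+1) * Atot μ (k+1)
      = ∑ T ∈ Finset.powersetCard (k+1) (Finset.univ : Finset (Fin N)),
          ∑ _i ∈ T, entropy (margin μ T) := by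
    unfold Atot
    rw [Finset.mul_sum]
    apply Finset.sum_congr rfl
    intro T hT
    rw [Finset.sum_const, (Finset.mem_powersetCard_univ.mp hT :  T.card = k+1), nsmul_eq_mul]
    push_cast; ring
  have h2 : ∑ T ∈ Finset.powersetCard (k+1) (Finset.univ : Finset (Fin N)),
        ∑ i ∈ T, (entropy (margin μ (T.erase i)) + Real.log d)
      = ((N - k : ℕ) : ℝ) * Atot μ k + ((N - k : ℕ) : ℝ) * (N.choose k : ℝ) * Real.log d := by
    rw [pair_sum k (fun S _ => entropy (margin μ S) + Real.log d)]
    have : ∀ S ∈ Finset.powersetCard k (Finset.univ : Finset (Fin N)),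
        ∑ _i ∈ Sᶜ, (entropy (margin μ S) + Real.log d)
          = ((N - k : ℕ) : ℝ) * (entropy (margin μ S) + Real.log d) := by
      intro S hS
      rw [Finset.sum_const, Finset.card_compl, (Finset.mem_powersetCard_univ.mp hS : S.card = k),
        Fintype.card_fin, nsmul_eq_mul]
    rw [Finset.sum_congr rfl this, ← Finset.mul_sum, Finset.sum_add_distrib, Finset.sum_const,
      Finset.card_powersetCard, Finset.card_univ, Fintype.card_fin, nsmul_eq_mul]
    unfold Atot
    ring
  rw [h1, ← h2]
  apply Finset.sum_le_sum
  intro T hT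
  apply Finset.sum_le_sum
  intro i hi
  have hins : insert i (T.erase i) = T := Finset.insert_erase hi
  have := entropy_margin_insert_le hμ hd (Finset.notMem_erase i T)
  rwa [hins] at this

lemma avgEntropy_mono {μ : (Fin N → Fin d) → ℝ} (hμ : IsPMF μ) {k : ℕ} (hk : k < N) :
    avgEntropy μ k ≤ avgEntropy μ (k+1) := by
  rw [avgEntropy_eq, avgEntropy_eq]
  have hc1 : 0 < (N.choose k : ℝ) := by exact_mod_cast Nat.choose_pos (le_of_lt hk)
  have hc2 : 0 < (N.choose (k+1) : ℝ) := by exact_mod_cast Nat.choose_pos hk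
  rw [div_le_div_iff₀ hc1 hc2]
  have hid : (N.choose (k+1) : ℝ) * ((k:ℝ)+1) = (N.choose k : ℝ) * ((N - k : ℕ) : ℝ) := by
    exact_mod_cast congrArg (Nat.cast : ℕ → ℝ) (Nat.choose_succ_right_eq N k)
  have h := Astep_left hμ hk
  have hkpos : (0:ℝ) < (k:ℝ) + 1 := by positivity
  rw [← mul_le_mul_iff_of_pos_right hkpos]
  calc Atot μ k * (N.choose (k+1) : ℝ) * ((k:ℝ)+1)
      = Atot μ k * ((N.choose (k+1) : ℝ) * ((k:ℝ)+1)) := by ring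
    _ = Atot μ k * ((N.choose k : ℝ) * ((N - k : ℕ) : ℝ)) := by rw [hid]
    _ = (((N - k : ℕ) : ℝ) * Atot μ k) * (N.choose k : ℝ) := by ring
    _ ≤ (((k:ℝ)+1) * Atot μ (k+1)) * (N.choose k : ℝ) := mul_le_mul_of_nonneg_right h hc1.le
    _ = Atot μ (k+1) * (N.choose k : ℝ) * ((k:ℝ)+1) := by ring

lemma avgEntropy_lip {μ : (Fin N → Fin d) → ℝ} (hμ : IsPMF μ) (hd : 1 ≤ d) {k : ℕ} (hk : k < N) :
    avgEntropy μ (k+1) ≤ avgEntropy μ k + Real.log d := by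
  rw [avgEntropy_eq, avgEntropy_eq]
  have hc1 : 0 < (N.choose k : ℝ) := by exact_mod_cast Nat.choose_pos (le_of_lt hk)
  have hc2 : 0 < (N.choose (k+1) : ℝ) := by exact_mod_cast Nat.choose_pos hk
  have hNk : 0 < ((N - k : ℕ) : ℝ) := by
    have : 0 < N - k := Nat.sub_pos_of_lt hk
    exact_mod_cast this
  rw [div_add' _ _ _ (ne_of_gt hc1), div_le_div_iff₀ hc2 hc1]
  have hid : (N.choose (k+1) : ℝ) * ((k:ℝ)+1) = (N.choose k : ℝ) * ((N - k : ℕ) : ℝ) := by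
    exact_mod_cast congrArg (Nat.cast : ℕ → ℝ) (Nat.choose_succ_right_eq N k)
  have h := Astep_right hμ hd hk
  have hkpos : (0:ℝ) < (k:ℝ) + 1 := by positivity
  rw [← mul_le_mul_iff_of_pos_right hkpos]
  calc Atot μ (k+1) * (N.choose k : ℝ) * ((k:ℝ)+1)
      = (((k:ℝ)+1) * Atot μ (k+1)) * (N.choose k : ℝ) := by ring
    _ ≤ (((N - k : ℕ) : ℝ) * Atot μ k + ((N - k : ℕ) : ℝ) * (N.choose k : ℝ) * Real.log d) * (N.choose k : ℝ) :=
        mul_le_mul_of_nonneg_right h hc1.le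
    _ = (Atot μ k + Real.log d * (N.choose k : ℝ)) * ((N.choose k : ℝ) * ((N - k : ℕ) : ℝ)) := by ring
    _ = (Atot μ k + Real.log d * (N.choose k : ℝ)) * ((N.choose (k+1) : ℝ) * ((k:ℝ)+1)) := by rw [hid]
    _ = (Atot μ k + Real.log d * (N.choose k : ℝ)) * (N.choose (k+1) : ℝ) * ((k:ℝ)+1) := by ring

end Facts

section Facts2
variable {d N : ℕ}

lemma avgEntropy_le_card_log {μ : (Fin N → Fin d) → ℝ} (hμ : IsPMF μ) {k : ℕ} (hk : k ≤ N) :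
    avgEntropy μ k ≤ (k : ℝ) * Real.log d := by
  rw [avgEntropy_eq]
  have hc1 : 0 < (N.choose k : ℝ) := by exact_mod_cast Nat.choose_pos hk
  rw [div_le_iff₀ hc1]
  unfold Atot
  calc ∑ S ∈ Finset.powersetCard k (Finset.univ : Finset (Fin N)), entropy (margin μ S)
      ≤ ∑ S ∈ Finset.powersetCard k (Finset.univ : Finset (Fin N)), (k:ℝ) * Real.log d := by
        apply Finset.sum_le_sum
        intro S hS
        have := entropy_margin_le_card_log hμ S
        rwa [(Finset.mem_powersetCard_univ.mp hS : S.card = k)] at this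
    _ = (k:ℝ) * Real.log d * (N.choose k : ℝ) := by
        rw [Finset.sum_const, Finset.card_powersetCard, Finset.card_univ, Fintype.card_fin,
          nsmul_eq_mul]
        ring

lemma avgEntropy_le_entropy {μ : (Fin N → Fin d) → ℝ} (hμ : IsPMF μ) {k : ℕ} (hk : k ≤ N) :
    avgEntropy μ k ≤ entropy μ := by
  rw [avgEntropy_eq]
  have hc1 : 0 < (N.choose k : ℝ) := by exact_mod_cast Nat.choose_pos hk
  rw [div_le_iff₀ hc1]
  unfold Atot
  calc ∑ S ∈ Finset.powersetCard k (Finset.univ : Finset (Fin N)), entropy (margin μ S)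
      ≤ ∑ _S ∈ Finset.powersetCard k (Finset.univ : Finset (Fin N)), entropy μ :=
        Finset.sum_le_sum (fun S _ => entropy_margin_le_entropy hμ S)
    _ = entropy μ * (N.choose k : ℝ) := by
        rw [Finset.sum_const, Finset.card_powersetCard, Finset.card_univ, Fintype.card_fin,
          nsmul_eq_mul]
        ring

lemma sum_compl_entropy (μ : (Fin N → Fin d) → ℝ) {k : ℕ} (hk : k ≤ N) :
    ∑ S ∈ Finset.powersetCard k (Finset.univ : Finset (Fin N)), entropy (margin μ Sᶜ)
      = Atot μ (N - k) := by
  unfold Atot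
  refine Finset.sum_nbij' (fun S => Sᶜ) (fun S => Sᶜ) ?_ ?_ ?_ ?_ ?_
  · intro S hS
    rw [Finset.mem_powersetCard_univ] at hS ⊢
    rw [Finset.card_compl, hS, Fintype.card_fin]
  · intro S hS
    rw [Finset.mem_powersetCard_univ] at hS ⊢
    rw [Finset.card_compl, hS, Fintype.card_fin, Nat.sub_sub_self hk]
  · intro S _; exact compl_compl S
  · intro S _; exact compl_compl S
  · intro S _; rfl

lemma neural_eq (μ : (Fin N → Fin d) → ℝ) (hμ : IsPMF μ) :
    neural μ = (1 / ((N:ℝ)+1)) *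
      (2 * ∑ k ∈ Finset.range (N+1), avgEntropy μ k - ((N:ℝ)+1) * entropy μ) := by
  unfold neural
  congr 1
  have h0 : ∑ S : Finset (Fin N), (1/(N.choose S.card):ℝ) * MIS μ S
      = ∑ k ∈ Finset.range (N+1), ∑ S ∈ Finset.powersetCard k (Finset.univ : Finset (Fin N)),
          (1/(N.choose S.card):ℝ) * MIS μ S := by
    rw [← Finset.sum_fiberwise_of_maps_to (g := Finset.card)
      (fun S _ => Finset.mem_range.mpr (Nat.lt_succ_of_le (by
        simpa using Finset.card_le_univ S)))]
    apply Finset.sum_congr rfl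
    intro k _
    apply Finset.sum_congr _ (fun _ _ => rfl)
    ext S
    simp [Finset.mem_powersetCard_univ]
  rw [h0]
  have h1 : ∀ k ∈ Finset.range (N+1),
      ∑ S ∈ Finset.powersetCard k (Finset.univ : Finset (Fin N)),
          (1/(N.choose S.card):ℝ) * MIS μ S
        = avgEntropy μ k + avgEntropy μ (N - k) - entropy μ := by
    intro k hk
    have hkN : k ≤ N := Nat.lt_succ_iff.mp (Finset.mem_range.mp hk)
    have hc1 : 0 < (N.choose k : ℝ) := by exact_mod_cast Nat.choose_pos hkN
    have hstep : ∀ S ∈ Finset.powersetCard k (Finset.univ : Finset (Fin N)),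
        (1/(N.choose S.card):ℝ) * MIS μ S = (1/(N.choose k):ℝ) * MIS μ S := by
      intro S hS
      rw [(Finset.mem_powersetCard_univ.mp hS : S.card = k)]
    rw [Finset.sum_congr rfl hstep, ← Finset.mul_sum]
    unfold MIS
    rw [Finset.sum_sub_distrib, Finset.sum_add_distrib, sum_compl_entropy μ hkN, Finset.sum_const, Finset.card_powersetCard, Finset.card_univ,
      Fintype.card_fin, nsmul_eq_mul]
    have hsymm : (N.choose (N - k) : ℝ) = (N.choose k : ℝ) := by
      exact_mod_cast congrArg (Nat.cast : ℕ → ℝ) (Nat.choose_symm hkN)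
    rw [avgEntropy_eq, avgEntropy_eq, hsymm]
    unfold Atot
    field_simp
  rw [Finset.sum_congr rfl h1, Finset.sum_sub_distrib, Finset.sum_add_distrib, Finset.sum_const,
    Finset.card_range, nsmul_eq_mul]
  have h2 : ∑ k ∈ Finset.range (N+1), avgEntropy μ (N - k)
      = ∑ k ∈ Finset.range (N+1), avgEntropy μ k := by
    have := Finset.sum_range_reflect (fun k => avgEntropy μ (d := d) k) (N+1)
    simpa using this
  rw [h2]
  push_cast
  ring

end Facts2

section Analysis
variable {d N : ℕ}

lemma sum_cast_range (n : ℕ) : ∑ j ∈ Finset.range n, (j:ℝ) = (n:ℝ) * ((n:ℝ) - 1)/2 := by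
  induction n with
  | zero => simp
  | succ m ih =>
    rw [Finset.sum_range_succ, ih]
    push_cast
    ring

lemma avgEntropy_lip_chain {μ : (Fin N → Fin d) → ℝ} (hμ : IsPMF μ) (hd : 1 ≤ d)
    {k j : ℕ} (h : k + j ≤ N) :
    avgEntropy μ (k + j) ≤ avgEntropy μ k + (j:ℝ) * Real.log d := by
  induction j with
  | zero => simp
  | succ n ih =>
    have h1 : k + n < N := by omega
    have h2 := avgEntropy_lip hμ hd h1
    have h3 := ih (by omega)
    have : k + (n+1) = (k + n) + 1 := by ring
    rw [this]
    push_cast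
    calc avgEntropy μ ((k+n)+1) ≤ avgEntropy μ (k+n) + Real.log d := h2
      _ ≤ avgEntropy μ k + (n:ℝ) * Real.log d + Real.log d := by linarith
      _ = avgEntropy μ k + ((n:ℝ)+1) * Real.log d := by ring

lemma deficit_nonneg {μ : (Fin N → Fin d) → ℝ} (hμ : IsPMF μ) {k : ℕ} (hk : k ≤ N) :
    0 ≤ min ((k:ℝ) * Real.log d) (entropy μ) - avgEntropy μ k := by
  have h1 := avgEntropy_le_card_log hμ hk
  have h2 := avgEntropy_le_entropy hμ hk
  simp only [le_min_iff, sub_nonneg]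
  exact ⟨h1, h2⟩

lemma deficit_sum {μ : (Fin N → Fin d) → ℝ} (hμ : IsPMF μ) (hd : 1 ≤ d) {k0 m : ℕ}
    (h : k0 + m ≤ N) :
    ((m:ℝ)+1) * (min ((k0:ℝ) * Real.log d) (entropy μ) - avgEntropy μ k0)
        - Real.log d * ((m:ℝ) * ((m:ℝ)+1)) / 2
      ≤ ∑ k ∈ Finset.range (N+1), (min ((k:ℝ) * Real.log d) (entropy μ) - avgEntropy μ k) := by
  set lam := Real.log d with hlam
  have hlam0 : 0 ≤ lam := Real.log_natCast_nonneg d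
  set D : ℕ → ℝ := fun k => min ((k:ℝ) * lam) (entropy μ) - avgEntropy μ k with hD
  have step1 : ∑ k ∈ Finset.Ico k0 (k0+m+1), D k ≤ ∑ k ∈ Finset.range (N+1), D k := by
    apply Finset.sum_le_sum_of_subset_of_nonneg
    · intro k hk
      rw [Finset.mem_Ico] at hk
      rw [Finset.mem_range]
      omega
    · intro k hk _
      rw [Finset.mem_range] at hk
      exact deficit_nonneg hμ (by omega)
  have step2 : ∑ k ∈ Finset.Ico k0 (k0+m+1), D k = ∑ j ∈ Finset.range (m+1), D (k0 + j) := by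
    rw [Finset.sum_Ico_eq_sum_range]
    have he : k0 + m + 1 - k0 = m + 1 := by omega
    rw [he]
  have step3 : ∀ j ∈ Finset.range (m+1), D k0 - (j:ℝ) * lam ≤ D (k0 + j) := by
    intro j hj
    rw [Finset.mem_range] at hj
    have hlc := avgEntropy_lip_chain hμ hd (k := k0) (j := j) (by omega)
    have hmin : min ((k0:ℝ) * lam) (entropy μ) ≤ min (((k0 + j : ℕ):ℝ) * lam) (entropy μ) := by
      apply min_le_min _ le_rfl
      have : ((k0:ℝ)) ≤ ((k0 + j : ℕ):ℝ) := by push_cast; linarith [Nat.cast_nonneg (α := ℝ) j]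
      exact mul_le_mul_of_nonneg_right this hlam0
    simp only [hD]
    have : (((k0 + j : ℕ)):ℝ) = (k0:ℝ) + (j:ℝ) := by push_cast; ring
    nlinarith [hlc, hmin]
  have step4 : ∑ j ∈ Finset.range (m+1), (D k0 - (j:ℝ) * lam)
      ≤ ∑ j ∈ Finset.range (m+1), D (k0 + j) := Finset.sum_le_sum step3
  have step5 : ∑ j ∈ Finset.range (m+1), (D k0 - (j:ℝ) * lam)
      = ((m:ℝ)+1) * D k0 - lam * ((m:ℝ) * ((m:ℝ)+1)) / 2 := by
    rw [Finset.sum_sub_distrib, Finset.sum_const, Finset.card_range, nsmul_eq_mul,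
      ← Finset.sum_mul, sum_cast_range]
    push_cast
    ring
  rw [← step5]
  calc ∑ j ∈ Finset.range (m+1), (D k0 - (j:ℝ) * lam)
      ≤ ∑ j ∈ Finset.range (m+1), D (k0 + j) := step4
    _ = ∑ k ∈ Finset.Ico k0 (k0+m+1), D k := step2.symm
    _ ≤ ∑ k ∈ Finset.range (N+1), D k := step1

lemma summin_le (H lam : ℝ) (hH : 0 ≤ H) {K : ℕ} (hK : K ≤ N) :
    ∑ k ∈ Finset.range (N+1), min ((k:ℝ) * lam) H
      ≤ lam * ((K:ℝ) * ((K:ℝ)+1)) / 2 + ((N:ℝ) - (K:ℝ)) * H := by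
  have hsplit : Finset.range (N+1) = Finset.Ico 0 (K+1) ∪ Finset.Ico (K+1) (N+1) := by
    rw [Finset.Ico_union_Ico_eq_Ico (by omega) (by omega), Finset.range_eq_Ico]
  rw [hsplit, Finset.sum_union (by
    apply Finset.Ico_disjoint_Ico_consecutive)]
  have b1 : ∑ k ∈ Finset.Ico 0 (K+1), min ((k:ℝ) * lam) H
      ≤ lam * ((K:ℝ) * ((K:ℝ)+1)) / 2 := by
    calc ∑ k ∈ Finset.Ico 0 (K+1), min ((k:ℝ) * lam) H
        ≤ ∑ k ∈ Finset.Ico 0 (K+1), (k:ℝ) * lam :=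
          Finset.sum_le_sum (fun k _ => min_le_left _ _)
      _ = lam * ((K:ℝ) * ((K:ℝ)+1)) / 2 := by
          rw [← Finset.range_eq_Ico, ← Finset.sum_mul, sum_cast_range]
          push_cast
          ring
  have b2 : ∑ k ∈ Finset.Ico (K+1) (N+1), min ((k:ℝ) * lam) H ≤ ((N:ℝ) - (K:ℝ)) * H := by
    calc ∑ k ∈ Finset.Ico (K+1) (N+1), min ((k:ℝ) * lam) H
        ≤ ∑ _k ∈ Finset.Ico (K+1) (N+1), H :=
          Finset.sum_le_sum (fun k _ => min_le_right _ _)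
      _ = ((N:ℝ) - (K:ℝ)) * H := by
          rw [Finset.sum_const, Nat.card_Ico, nsmul_eq_mul]
          congr 1
          have : (N+1) - (K+1) = N - K := by omega
          rw [this]
          push_cast [Nat.cast_sub hK]
          ring
  linarith

lemma sum_avgEntropy_eq {μ : (Fin N → Fin d) → ℝ} (hμ : IsPMF μ) :
    ∑ k ∈ Finset.range (N+1), avgEntropy μ k
      = (((N:ℝ)+1) * neural μ + ((N:ℝ)+1) * entropy μ) / 2 := by
  have h := neural_eq μ hμ
  have hN : ((N:ℝ)+1) ≠ 0 := by positivity
  field_simp at h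
  linarith

end Analysis

lemma entropy_le_N_log {d N : ℕ} {μ : (Fin N → Fin d) → ℝ} (hμ : IsPMF μ) :
    entropy μ ≤ (N:ℝ) * Real.log d := by
  have := entropy_le_log_card hμ
  rwa [Fintype.card_fun, Fintype.card_fin, Fintype.card_fin, Nat.cast_pow, Real.log_pow] at this


lemma arith_U (Nr a H c lam x eta : ℝ) (hlam : 0 < lam) (hN1 : 1 ≤ Nr)
    (hK0 : 0 ≤ a) (hKNr : a ≤ Nr) (hKle : a*lam ≤ H) (hKge : H ≤ (a+1)*lam)
    (hHlo : (x-eta)*(Nr*lam) ≤ H) (hHhi : H ≤ (x+eta)*(Nr*lam))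
    (hclo : (x*(1-x) - eta)*(Nr*lam) ≤ c) (hx0 : 0 ≤ x) (hx1 : x ≤ 1) (heta : 0 < eta) :
    lam * (a*(a+1))/2 + (Nr - a)*H - ((Nr+1)*c + (Nr+1)*H)/2 ≤ 2*eta*lam*Nr^2 + lam*Nr := by
  have hNpos : 0 < Nr := by linarith
  have hKlo : (x - eta) * Nr - 1 ≤ a := by
    have hch : ((x - eta) * Nr) * lam ≤ (a + 1) * lam := by
      calc ((x - eta) * Nr) * lam = (x - eta) * (Nr * lam) := by ring
        _ ≤ H := hHlo
        _ ≤ (a + 1) * lam := hKge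
    have := le_of_mul_le_mul_right hch hlam
    linarith
  have hKhi : a ≤ (x + eta) * Nr := by
    have hch : a * lam ≤ ((x + eta) * Nr) * lam := by
      calc a * lam ≤ H := hKle
        _ ≤ (x + eta) * (Nr * lam) := hHhi
        _ = ((x + eta) * Nr) * lam := by ring
    exact le_of_mul_le_mul_right hch hlam
  have hprod : (a - x*Nr) * (Nr - a - x*Nr) ≤ (eta*Nr+1) * Nr := by
    have ha1 : a - x*Nr ≤ eta*Nr+1 := by nlinarith [hKhi]
    have ha2 : -(eta*Nr+1) ≤ a - x*Nr := by nlinarith [hKlo]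
    have hb1 : Nr - a - x*Nr ≤ Nr := by nlinarith [hK0, hNpos, hx0]
    have hb2 : -Nr ≤ Nr - a - x*Nr := by nlinarith [hKNr, hx1, hNpos]
    nlinarith [mul_nonneg (by linarith : (0:ℝ) ≤ eta*Nr+1 - (a - x*Nr))
        (by linarith : (0:ℝ) ≤ Nr + (Nr - a - x*Nr)),
      mul_nonneg (by linarith : (0:ℝ) ≤ eta*Nr+1 + (a - x*Nr))
        (by linarith : (0:ℝ) ≤ Nr - (Nr - a - x*Nr))]
  set t : ℝ := H/lam - a with htdef
  have ht0 : 0 ≤ t := by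
    rw [htdef, sub_nonneg, le_div_iff₀ hlam]
    linarith [hKle]
  have ht1 : t ≤ 1 := by
    rw [htdef, sub_le_iff_le_add, div_le_iff₀ hlam]
    calc H ≤ (a + 1) * lam := hKge
      _ = (1 + a) * lam := by ring
  have hHt : H = (a + t) * lam := by
    rw [htdef]
    field_simp
    ring
  clear_value t
  have hstep1 : lam*((Nr - 2*a - 1)*t) ≤ lam*Nr := by
    have : (Nr - 2*a - 1)*t ≤ Nr := by nlinarith [ht0, ht1, hK0, hNpos]
    exact mul_le_mul_of_nonneg_left this hlam.le
  have hxx : 0 ≤ x*(1-x) := by nlinarith [hx0, hx1]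
  have hstep2 : -(Nr+1)*c ≤ -(x*(1-x))*Nr^2*lam + 2*eta*lam*Nr^2 := by
    have hmul := mul_le_mul_of_nonneg_left hclo (show (0:ℝ) ≤ Nr+1 by linarith)
    have e1 : 0 ≤ x*(1-x)*Nr*lam := by
      apply mul_nonneg (mul_nonneg hxx (by linarith)) hlam.le
    have e2 : 0 ≤ eta*lam*Nr*(Nr-1) := by
      apply mul_nonneg (mul_nonneg (mul_nonneg heta.le hlam.le) (by linarith)) (by linarith)
    linarith [hmul, e1, e2]
  have hstep3 : lam*(a*(Nr-a)) ≤ (x*(1-x))*Nr^2*lam + lam*((eta*Nr+1)*Nr) := by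
    have h2 : a*(Nr-a) ≤ x*(1-x)*Nr^2 + (eta*Nr+1)*Nr := by nlinarith [hprod]
    linarith [mul_le_mul_of_nonneg_left h2 hlam.le]
  have h2U : 2*(lam * (a*(a+1))/2 + (Nr - a)*H - ((Nr+1)*c + (Nr+1)*H)/2)
      = lam*(a*(Nr-a)) + lam*((Nr - 2*a - 1)*t) + (-(Nr+1)*c) := by
    rw [hHt]
    ring
  linarith [h2U, hstep1, hstep2, hstep3, mul_nonneg (mul_nonneg heta.le hlam.le) (sq_nonneg Nr)]

lemma arith_fin (D U lam gam beta eta Nr mr : ℝ) (hlam : 0 < lam) (hgam : 0 < gam)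
    (hbeta : 0 < beta) (hN1 : 1 ≤ Nr) (hmr0 : 0 ≤ mr)
    (hmain : (mr+1)*D - lam*(mr*(mr+1))/2 ≤ U)
    (hm1 : beta*Nr ≤ mr+1) (hmle : mr ≤ beta*Nr) (hbg : beta ≤ gam/4)
    (hU2 : U ≤ 2*eta*lam*Nr^2 + lam*Nr) (hNn : 1 ≤ eta*Nr) (hetadef : eta = gam*beta/8) :
    D ≤ gam*Nr*lam := by
  have hNpos : 0 < Nr := by linarith
  have hmpos : (0:ℝ) < mr + 1 := by linarith
  have hb1 : lam*(mr*(mr+1))/2 ≤ (mr+1)*(gam*Nr*lam)/2 := by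
    have hmg : mr ≤ gam*Nr/4 := by nlinarith [hmle, hbg, hNpos]
    have : lam*mr ≤ gam*Nr*lam := by nlinarith [hmg, hlam, hgam, hNpos]
    nlinarith [hmpos, this, hlam]
  have hb2 : U ≤ (mr+1)*(gam*Nr*lam)/2 := by
    have h3 : 2*eta*lam*Nr^2 + lam*Nr ≤ 3*eta*lam*Nr^2 := by
      have := mul_le_mul_of_nonneg_right hNn (mul_nonneg hlam.le hNpos.le)
      nlinarith [this]
    have h4 : 3*eta*lam*Nr^2 ≤ beta*Nr*(gam*Nr*lam)/2 := by
      rw [hetadef]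
      have hpos : 0 ≤ gam*beta*lam*Nr^2 := by positivity
      nlinarith [hpos]
    have h5 : beta*Nr*(gam*Nr*lam)/2 ≤ (mr+1)*(gam*Nr*lam)/2 := by
      have hg : (0:ℝ) ≤ gam*Nr*lam := by positivity
      nlinarith [hm1, hg]
    linarith [hU2]
  have hfin : (mr+1)*D ≤ (mr+1)*(gam*Nr*lam) := by linarith [hmain]
  exact le_of_mul_le_mul_left (by linarith [hfin]) hmpos

set_option maxHeartbeats 1000000 in
lemma deficit_small (d : ℕ) (hd : 2 ≤ d) (x : ℝ) (hx : x ∈ Set.Icc (0:ℝ) 1)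
    (X : (N : ℕ) → (Fin N → Fin d) → ℝ) (hpmf : ∀ N, IsPMF (X N))
    (hent : Filter.Tendsto (fun N : ℕ => entropy (X N) / (N * Real.log d)) Filter.atTop (nhds x))
    (hmax : Filter.Tendsto (fun N : ℕ => neural (X N) / (N * Real.log d)) Filter.atTop
      (nhds (x * (1 - x))))
    (y : ℝ) (hy : y ∈ Set.Ioo (0:ℝ) 1) (γ : ℝ) (hγ : 0 < γ) :
    ∃ N₀ : ℕ, ∀ N, N₀ ≤ N →
      min ((⌊y * N⌋₊:ℝ) * Real.log d) (entropy (X N)) - avgEntropy (X N) ⌊y * N⌋₊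
        ≤ γ * N * Real.log d := by
  classical
  set lam := Real.log d with hlamdef
  have hlam : 0 < lam := Real.log_pos (by exact_mod_cast hd)
  obtain ⟨hy0, hy1⟩ := hy
  obtain ⟨hx0, hx1⟩ := hx
  set β : ℝ := min (γ/4) ((1-y)/4) with hβdef
  have hβ : 0 < β := by
    apply lt_min (by linarith) (by linarith)
  set η : ℝ := γ * β / 8 with hηdef
  have hη : 0 < η := by positivity
  -- eventual bounds from the limits
  obtain ⟨N₁, hN₁⟩ := (Metric.tendsto_atTop.mp hent) η hη
  obtain ⟨N₂, hN₂⟩ := (Metric.tendsto_atTop.mp hmax) η hη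
  -- pick N₀ large
  obtain ⟨N₃, hN₃⟩ := exists_nat_gt (2/η + 2/β + 2/(y*1) + 4/(γ*β) + 4)
  refine ⟨N₁ + N₂ + N₃ + 1, fun N hN => ?_⟩
  have hN1 : N₁ ≤ N := by omega
  have hN2 : N₂ ≤ N := by omega
  have hNN3 : (N₃:ℝ) ≤ N := by exact_mod_cast (by omega : N₃ ≤ N)
  have hN1' : 1 ≤ N := by omega
  have hNpos : (0:ℝ) < N := by exact_mod_cast (by omega : 0 < N)
  have hNbig : 2/η + 2/β + 2/(y*1) + 4/(γ*β) + 4 ≤ (N:ℝ) := le_trans (le_of_lt hN₃) hNN3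
  set μ := X N with hμdef
  have hμ : IsPMF μ := hpmf N
  set H := entropy μ with hHdef
  set c := neural μ with hcdef
  have hH0 : 0 ≤ H := entropy_nonneg hμ
  have hHN : H ≤ N * lam := entropy_le_N_log hμ
  -- bounds from hent
  have hHb : |H / (N * lam) - x| ≤ η := le_of_lt (by
    have := hN₁ N hN1
    rwa [Real.dist_eq] at this)
  have hNlam : (0:ℝ) < N * lam := by positivity
  have hHlo : (x - η) * (N * lam) ≤ H := by
    rw [abs_le] at hHb
    have := hHb.1
    have h2 : (x - η) ≤ H / (N * lam) := by linarith
    calc (x - η) * (N * lam) ≤ (H / (N * lam)) * (N * lam) :=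
          mul_le_mul_of_nonneg_right h2 hNlam.le
      _ = H := by field_simp
  have hHhi : H ≤ (x + η) * (N * lam) := by
    rw [abs_le] at hHb
    have h2 : H / (N * lam) ≤ x + η := by linarith [hHb.2]
    calc H = (H / (N * lam)) * (N * lam) := by field_simp
      _ ≤ (x + η) * (N * lam) := mul_le_mul_of_nonneg_right h2 hNlam.le
  have hcb : |c / (N * lam) - x*(1-x)| ≤ η := le_of_lt (by
    have := hN₂ N hN2
    rwa [Real.dist_eq] at this)
  have hclo : (x*(1-x) - η) * (N * lam) ≤ c := by
    rw [abs_le] at hcb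
    have h2 : (x*(1-x) - η) ≤ c / (N * lam) := by linarith [hcb.1]
    calc (x*(1-x) - η) * (N * lam) ≤ (c / (N * lam)) * (N * lam) :=
          mul_le_mul_of_nonneg_right h2 hNlam.le
      _ = c := by field_simp
  -- the floor quantities
  set k0 := ⌊y * N⌋₊ with hk0def
  set m := ⌊β * N⌋₊ with hmdef
  set K := ⌊H / lam⌋₊ with hKdef
  have hk0le : (k0:ℝ) ≤ y * N := Nat.floor_le (by positivity)
  have hmle : (m:ℝ) ≤ β * N := Nat.floor_le (by positivity)
  have hmge : β * N - 1 ≤ (m:ℝ) := le_of_lt (by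
    have := Nat.lt_floor_add_one (β * N)
    linarith)
  have hKle : (K:ℝ) * lam ≤ H := by
    have := Nat.floor_le (show (0:ℝ) ≤ H / lam by positivity)
    calc (K:ℝ) * lam ≤ (H / lam) * lam := mul_le_mul_of_nonneg_right this hlam.le
      _ = H := by field_simp
  have hKge : H ≤ ((K:ℝ) + 1) * lam := by
    have := Nat.lt_floor_add_one (H / lam)
    calc H = (H / lam) * lam := by field_simp
      _ ≤ ((K:ℝ) + 1) * lam := mul_le_mul_of_nonneg_right (le_of_lt this) hlam.le
  have hKN : K ≤ N := by
    have : H / lam ≤ (N:ℝ) := by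
      rw [div_le_iff₀ hlam]
      linarith [hHN]
    calc K = ⌊H / lam⌋₊ := rfl
      _ ≤ ⌊(N:ℝ)⌋₊ := Nat.floor_le_floor this
      _ = N := Nat.floor_natCast N
  have hk0m : k0 + m ≤ N := by
    have hr : ((k0 + m : ℕ):ℝ) ≤ (N:ℝ) := by
      push_cast
      have hβy : β ≤ (1-y)/4 := min_le_right _ _
      nlinarith [hk0le, hmle, hNpos]
    exact_mod_cast hr
  -- main chain
  have hT := deficit_sum hμ (by omega : 1 ≤ d) hk0m
  have hsmin := summin_le (N := N) H lam hH0 hKN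
  have hsavg := sum_avgEntropy_eq (N := N) hμ
  have hTsplit : ∑ k ∈ Finset.range (N+1), (min ((k:ℝ) * lam) H - avgEntropy μ k)
      = ∑ k ∈ Finset.range (N+1), min ((k:ℝ) * lam) H
        - ∑ k ∈ Finset.range (N+1), avgEntropy μ k := Finset.sum_sub_distrib _ _
  set D : ℝ := min ((k0:ℝ) * lam) H - avgEntropy μ k0 with hDdef
  set U : ℝ := lam * ((K:ℝ) * ((K:ℝ)+1)) / 2 + ((N:ℝ) - (K:ℝ)) * H
      - (((N:ℝ)+1) * c + ((N:ℝ)+1) * H) / 2 with hUdef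
  have hmain : ((m:ℝ)+1) * D - lam * ((m:ℝ) * ((m:ℝ)+1)) / 2 ≤ U := by
    rw [hUdef]
    calc ((m:ℝ)+1) * D - lam * ((m:ℝ) * ((m:ℝ)+1)) / 2
        ≤ ∑ k ∈ Finset.range (N+1), (min ((k:ℝ) * lam) H - avgEntropy μ k) := hT
      _ = ∑ k ∈ Finset.range (N+1), min ((k:ℝ) * lam) H
          - ∑ k ∈ Finset.range (N+1), avgEntropy μ k := hTsplit
      _ ≤ lam * ((K:ℝ) * ((K:ℝ)+1)) / 2 + ((N:ℝ) - (K:ℝ)) * H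
          - (((N:ℝ)+1) * c + ((N:ℝ)+1) * H) / 2 := by
          rw [hsavg]
          linarith [hsmin]
  -- bound U
  have hK0 : (0:ℝ) ≤ K := Nat.cast_nonneg K
  have hKNr : (K:ℝ) ≤ N := by exact_mod_cast hKN
  have hN1r : (1:ℝ) ≤ N := by exact_mod_cast hN1'
  have hU : U ≤ 2 * η * lam * N^2 + lam * N := by
    have := arith_U (N:ℝ) (K:ℝ) H c lam x η hlam hN1r hK0 hKNr hKle hKge hHlo hHhi hclo hx0 hx1 hη
    rw [hUdef]
    linarith [this]
  -- window size bounds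
  have hm1 : β * N ≤ (m:ℝ) + 1 := by linarith [hmge]
  have hNn : 1 ≤ η * N := by
    have h0 : 2/η ≤ (N:ℝ) := by
      have h1 : (0:ℝ) ≤ 2/β := by positivity
      have h2 : (0:ℝ) ≤ 2/(y*1) := by positivity
      have h3 : (0:ℝ) ≤ 4/(γ*β) := by positivity
      linarith [hNbig]
    rw [div_le_iff₀ hη] at h0
    nlinarith [h0, hη]
  have hβγ : β ≤ γ/4 := min_le_left _ _
  exact arith_fin D U lam γ β η N (m:ℝ) hlam hγ hβ hN1r (Nat.cast_nonneg m) hmain hm1 hmle hβγ hU hNn rfl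

lemma markov_card {σ : Type*} [DecidableEq σ] {A : Finset σ} {f : σ → ℝ}
    (h0 : ∀ s ∈ A, 0 ≤ f s) {B t : ℝ} (hsum : ∑ s ∈ A, f s ≤ B) (p : σ → Prop)
    (hp : ∀ s ∈ A, p s → t < f s) :
    ((A.filter p).card : ℝ) * t ≤ B := by
  classical
  have h1 : ((A.filter p).card : ℝ) * t = ∑ _s ∈ A.filter p, t := by
    rw [Finset.sum_const, nsmul_eq_mul]
  rw [h1]
  calc ∑ _s ∈ A.filter p, t ≤ ∑ s ∈ A.filter p, f s := by
        apply Finset.sum_le_sum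
        intro s hs
        rw [Finset.mem_filter] at hs
        exact le_of_lt (hp s hs.1 hs.2)
    _ ≤ ∑ s ∈ A, f s :=
        Finset.sum_le_sum_of_subset_of_nonneg (Finset.filter_subset _ _)
          (fun s hs _ => h0 s hs)
    _ ≤ B := hsum

set_option maxHeartbeats 1000000 in
/-- threshold behavior of subsystems of an approximate `x`-maximizer for the
neural complexity: for `y ∈ (0,1)`, `k_N = ⌊yN⌋` and `ε > 0`, for `N` large all but at most
`ε·C(N,k_N)` of the subsets `S` of size `k_N` satisfy: if `y ≤ x`,
`1 − ε ≤ H(X^N_S)/(|S| log d) ≤ 1`; if `y ≥ x`, `0 ≤ H(X^N | X^N_S)/(N log d) ≤ ε`,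
where `H(X^N | X^N_S) = H(X^N) − H(X^N_S)`. -/
theorem stmt4 (d : ℕ) (hd : 2 ≤ d) (x : ℝ) (hx : x ∈ Set.Icc (0:ℝ) 1)
    (X : (N : ℕ) → (Fin N → Fin d) → ℝ) (hpmf : ∀ N, IsPMF (X N))
    (hent : Tendsto (fun N : ℕ => entropy (X N) / (N * Real.log d)) atTop (nhds x))
    (hmax : Tendsto (fun N : ℕ => neural (X N) / (N * Real.log d)) atTop
      (nhds (x * (1 - x))))
    (y : ℝ) (hy : y ∈ Set.Ioo (0:ℝ) 1) (ε : ℝ) (hε : 0 < ε) :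
    ∃ N₀ : ℕ, ∀ N, N₀ ≤ N →
      (y ≤ x →
        ((((Finset.powersetCard ⌊y * N⌋₊ (Finset.univ : Finset (Fin N))).filter
            (fun S => ¬ (1 - ε ≤ entropy (margin (X N) S) / (S.card * Real.log d) ∧
              entropy (margin (X N) S) / (S.card * Real.log d) ≤ 1))).card : ℝ)
          ≤ ε * (N.choose ⌊y * N⌋₊ : ℝ))) ∧
      (x ≤ y →
        ((((Finset.powersetCard ⌊y * N⌋₊ (Finset.univ : Finset (Fin N))).filter
            (fun S => ¬ (0 ≤ (entropy (X N) - entropy (margin (X N) S)) / (N * Real.log d) ∧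
              (entropy (X N) - entropy (margin (X N) S)) / (N * Real.log d) ≤ ε))).card : ℝ)
          ≤ ε * (N.choose ⌊y * N⌋₊ : ℝ))) := by
  classical
  set lam := Real.log d with hlamdef
  have hlam : 0 < lam := Real.log_pos (by exact_mod_cast hd)
  obtain ⟨hy0, hy1⟩ := hy
  obtain ⟨hx0, hx1⟩ := hx
  set η : ℝ := ε^2 * y / 8 with hηdef
  have hη : 0 < η := by positivity
  obtain ⟨N₄, hN₄⟩ := deficit_small d hd x ⟨hx0, hx1⟩ X hpmf hent hmax y ⟨hy0, hy1⟩ η hη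
  obtain ⟨N₅, hN₅⟩ := (Metric.tendsto_atTop.mp hent) η hη
  obtain ⟨N₆, hN₆⟩ := exists_nat_gt (2/y + 2/ε^2 + 1)
  refine ⟨N₄ + N₅ + N₆, fun N hN => ?_⟩
  have hN4 : N₄ ≤ N := by omega
  have hN5 : N₅ ≤ N := by omega
  have hNN6 : (N₆:ℝ) ≤ N := by exact_mod_cast (by omega : N₆ ≤ N)
  have hNbig : 2/y + 2/ε^2 + 1 ≤ (N:ℝ) := le_trans (le_of_lt hN₆) hNN6
  have hNpos : (0:ℝ) < N := by
    have h1 : (0:ℝ) ≤ 2/y := by positivity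
    have h2 : (0:ℝ) ≤ 2/ε^2 := by positivity
    linarith
  have hN1 : 1 ≤ N := by exact_mod_cast Nat.one_le_cast.mpr (by
    by_contra h
    push_neg at h
    interval_cases N
    simp at hNpos)
  set μ := X N with hμdef
  have hμ : IsPMF μ := hpmf N
  set H := entropy μ with hHdef
  have hH0 : 0 ≤ H := entropy_nonneg hμ
  have hNlam : (0:ℝ) < N * lam := by positivity
  have hHb : |H / (N * lam) - x| ≤ η := le_of_lt (by
    have := hN₅ N hN5
    rwa [Real.dist_eq] at this)
  have hHlo : (x - η) * (N * lam) ≤ H := by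
    rw [abs_le] at hHb
    have h2 : (x - η) ≤ H / (N * lam) := by linarith [hHb.1]
    calc (x - η) * (N * lam) ≤ (H / (N * lam)) * (N * lam) :=
          mul_le_mul_of_nonneg_right h2 hNlam.le
      _ = H := by field_simp
  have hHhi : H ≤ (x + η) * (N * lam) := by
    rw [abs_le] at hHb
    have h2 : H / (N * lam) ≤ x + η := by linarith [hHb.2]
    calc H = (H / (N * lam)) * (N * lam) := by field_simp
      _ ≤ (x + η) * (N * lam) := mul_le_mul_of_nonneg_right h2 hNlam.le
  set k0 := ⌊y * N⌋₊ with hk0def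
  have hD := hN₄ N hN4
  rw [← hμdef, ← hk0def, ← hHdef, ← hlamdef] at hD
  have hyN2 : 2 ≤ y * N := by
    have : 2/y ≤ (N:ℝ) := by
      have h2 : (0:ℝ) ≤ 2/ε^2 := by positivity
      linarith
    rw [div_le_iff₀ hy0] at this
    linarith
  have hk0hi : (k0:ℝ) ≤ y * N := Nat.floor_le (by positivity)
  have hk0lo : y * N - 1 ≤ (k0:ℝ) := le_of_lt (by
    have := Nat.lt_floor_add_one (y * N)
    linarith)
  have hk0half : y * N / 2 ≤ (k0:ℝ) := by linarith
  have hk0pos : (0:ℝ) < (k0:ℝ) := by linarith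
  have hk0N : k0 < N := by
    have : (k0:ℝ) < (N:ℝ) := by nlinarith [hk0hi, hy1, hNpos]
    exact_mod_cast this
  have hchoosepos : (0:ℝ) < (N.choose k0 : ℝ) := by
    exact_mod_cast Nat.choose_pos (le_of_lt hk0N)
  have hk0lam : (0:ℝ) < (k0:ℝ) * lam := by positivity
  have hsumA : ∑ S ∈ Finset.powersetCard k0 (Finset.univ : Finset (Fin N)),
      entropy (margin μ S) = (N.choose k0 : ℝ) * avgEntropy μ k0 := by
    rw [avgEntropy_eq, Atot]
    field_simp
  have hNeps : 2/ε^2 ≤ (N:ℝ) := by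
    have h1 : (0:ℝ) ≤ 2/y := by positivity
    linarith
  have hlamN : lam ≤ ε^2/2 * (N * lam) := by
    rw [div_le_iff₀ (by positivity : (0:ℝ) < ε^2)] at hNeps
    nlinarith [hlam, hNeps]
  constructor
  · -- case y ≤ x
    intro hyx
    have hk0H : (k0:ℝ) * lam - η * (N * lam) ≤ min ((k0:ℝ) * lam) H := by
      apply le_min
      · linarith only [mul_pos hη hNlam]
      · calc (k0:ℝ) * lam - η * (N * lam) ≤ y * N * lam - η * (N*lam) := by
              nlinarith only [hk0hi, hlam]
          _ ≤ x * (N * lam) - η * (N*lam) := by nlinarith only [hyx, hNlam]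
          _ = (x - η) * (N * lam) := by ring
          _ ≤ H := hHlo
    have havg : (k0:ℝ) * lam - avgEntropy μ k0 ≤ ε^2 * ((k0:ℝ) * lam) := by
      have h1 : (k0:ℝ) * lam - avgEntropy μ k0 ≤ (η + η) * (N * lam) := by
        linarith only [hk0H, hD]
      calc (k0:ℝ) * lam - avgEntropy μ k0 ≤ (η + η) * (N * lam) := h1
        _ = (ε^2 * y / 4) * (N * lam) := by rw [hηdef]; ring
        _ ≤ ε^2 * ((k0:ℝ) * lam) := by
            nlinarith only [hk0half, mul_pos (mul_pos hε hε) hlam, hy0, hNpos]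
    have hmark := markov_card (A := Finset.powersetCard k0 (Finset.univ : Finset (Fin N)))
      (f := fun S => (k0:ℝ) * lam - entropy (margin μ S))
      (fun S hS => by
        try dsimp only
        have h1 := entropy_margin_le_card_log hμ S
        rw [(Finset.mem_powersetCard_univ.mp hS : S.card = k0), ← hlamdef] at h1
        linarith only [h1])
      (B := (N.choose k0 : ℝ) * (ε^2 * ((k0:ℝ) * lam)))
      (t := ε * ((k0:ℝ) * lam))
      (by
        rw [Finset.sum_sub_distrib, hsumA, Finset.sum_const, Finset.card_powersetCard,
          Finset.card_univ, Fintype.card_fin, nsmul_eq_mul]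
        calc (N.choose k0 : ℝ) * ((k0:ℝ) * lam) - (N.choose k0 : ℝ) * avgEntropy μ k0
            = (N.choose k0 : ℝ) * ((k0:ℝ) * lam - avgEntropy μ k0) := by ring
          _ ≤ (N.choose k0 : ℝ) * (ε^2 * ((k0:ℝ) * lam)) :=
              mul_le_mul_of_nonneg_left havg hchoosepos.le)
      (fun S => ¬ (1 - ε ≤ entropy (margin μ S) / (S.card * lam) ∧
          entropy (margin μ S) / (S.card * lam) ≤ 1))
      (by
        intro S hS hpred
        have hcard : S.card = k0 := Finset.mem_powersetCard_univ.mp hS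
        rw [hcard] at hpred
        have hub : entropy (margin μ S) ≤ (k0:ℝ) * lam := by
          have h1 := entropy_margin_le_card_log hμ S
          rwa [hcard] at h1
        have hr1 : entropy (margin μ S) / ((k0:ℝ) * lam) ≤ 1 := by
          rw [div_le_one hk0lam]
          exact hub
        have hr2 : ¬ (1 - ε ≤ entropy (margin μ S) / ((k0:ℝ) * lam)) := by
          intro hcontra
          exact hpred ⟨hcontra, hr1⟩
        push_neg at hr2
        rw [div_lt_iff₀ hk0lam] at hr2
        try dsimp only
        linarith only [hr2])
    have heq : (N.choose k0 : ℝ) * (ε^2 * ((k0:ℝ) * lam))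
        = (ε * (N.choose k0 : ℝ)) * (ε * ((k0:ℝ) * lam)) := by ring
    rw [heq] at hmark
    have hle := le_of_mul_le_mul_right hmark (by positivity : (0:ℝ) < ε * ((k0:ℝ) * lam))
    convert hle using 2
    congr!
    all_goals (congr 1; ext S; simp only [Finset.mem_filter])
  · -- case x ≤ y
    intro hxy
    have hminH : H - η * (N * lam) - lam ≤ min ((k0:ℝ) * lam) H := by
      apply le_min
      · calc H - η * (N * lam) - lam ≤ (x + η) * (N * lam) - η * (N*lam) - lam := by
              linarith [hHhi]
          _ = x * (N * lam) - lam := by ring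
          _ ≤ y * N * lam - lam := by nlinarith only [hxy, hNlam]
          _ ≤ (k0:ℝ) * lam := by nlinarith only [hk0lo, hlam]
      · linarith only [mul_pos hη hNlam, hlam]
    have havg : H - avgEntropy μ k0 ≤ ε^2 * ((N:ℝ) * lam) := by
      have h1 : H - avgEntropy μ k0 ≤ (η + η) * (N * lam) + lam := by
        linarith only [hminH, hD]
      calc H - avgEntropy μ k0 ≤ (η + η) * (N * lam) + lam := h1
        _ ≤ (ε^2 * y / 4) * (N * lam) + ε^2/2 * (N * lam) := by
            rw [hηdef]
            have := hlamN
            linarith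
        _ ≤ ε^2 * ((N:ℝ) * lam) := by
            nlinarith only [hy1, hy0, mul_pos (mul_pos hε hε) hNlam]
    have hmark := markov_card (A := Finset.powersetCard k0 (Finset.univ : Finset (Fin N)))
      (f := fun S => H - entropy (margin μ S))
      (fun S hS => by
        try dsimp only
        have h1 := entropy_margin_le_entropy hμ S
        rw [← hHdef] at h1
        linarith only [h1])
      (B := (N.choose k0 : ℝ) * (ε^2 * ((N:ℝ) * lam)))
      (t := ε * ((N:ℝ) * lam))
      (by
        rw [Finset.sum_sub_distrib, hsumA, Finset.sum_const, Finset.card_powersetCard,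
          Finset.card_univ, Fintype.card_fin, nsmul_eq_mul]
        calc (N.choose k0 : ℝ) * H - (N.choose k0 : ℝ) * avgEntropy μ k0
            = (N.choose k0 : ℝ) * (H - avgEntropy μ k0) := by ring
          _ ≤ (N.choose k0 : ℝ) * (ε^2 * ((N:ℝ) * lam)) :=
              mul_le_mul_of_nonneg_left havg hchoosepos.le)
      (fun S => ¬ (0 ≤ (H - entropy (margin μ S)) / ((N:ℝ) * lam) ∧
          (H - entropy (margin μ S)) / ((N:ℝ) * lam) ≤ ε))
      (by
        intro S hS hpred
        have hub : entropy (margin μ S) ≤ H := entropy_margin_le_entropy hμ S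
        have hr1 : 0 ≤ (H - entropy (margin μ S)) / ((N:ℝ) * lam) := by
          apply div_nonneg _ hNlam.le
          linarith
        have hr2 : ¬ ((H - entropy (margin μ S)) / ((N:ℝ) * lam) ≤ ε) := by
          intro hcontra
          exact hpred ⟨hr1, hcontra⟩
        push_neg at hr2
        rw [lt_div_iff₀ hNlam] at hr2
        try dsimp only
        linarith only [hr2])
    have heq : (N.choose k0 : ℝ) * (ε^2 * ((N:ℝ) * lam))
        = (ε * (N.choose k0 : ℝ)) * (ε * ((N:ℝ) * lam)) := by ring
    rw [heq] at hmark
    have hle := le_of_mul_le_mul_right hmark (by positivity : (0:ℝ) < ε * ((N:ℝ) * lam))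
    convert hle using 2
    congr!
    all_goals (congr 1; ext S; simp only [Finset.mem_filter])
end

section
/- Let I^c be a non-null intricacy. Then for all x ∈ [0,1] and all N ≥ 1, |i^c_N(x) − i^c(x)| ≤ 1/(2√N). -/
open Filter

open MeasureTheory

/-- The coefficients `c^N_k = ∫ t^k (1−t)^{N−k} λ(dt)` of an intricacy with representing
measure `λ`. -/
noncomputable def cNk (lam : Measure ℝ) (N k : ℕ) : ℝ :=
  ∫ t, t ^ k * (1 - t) ^ (N - k) ∂lam

/-- `lam` is the representing measure of a non-null intricacy: a probability measure carried
by `[0,1]`, invariant under `t ↦ 1 − t`, with `λ((0,1)) > 0`. -/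
def IsIntricacyMeasure (lam : Measure ℝ) : Prop :=
  IsProbabilityMeasure lam ∧ lam (Set.Icc (0:ℝ) 1)ᶜ = 0 ∧
    Measure.map (fun t : ℝ => 1 - t) lam = lam ∧ 0 < lam (Set.Ioo (0:ℝ) 1)

/-- The intricacy `I^c(X) = ∑_{S ⊆ {1,…,N}} c^N_{|S|} · MI(X_S, X_{Sᶜ})` with coefficients
represented by `lam`. -/
noncomputable def intricacy (lam : Measure ℝ) {d N : ℕ} (μ : (Fin N → Fin d) → ℝ) : ℝ :=
  ∑ S : Finset (Fin N), cNk lam N S.card * MIS μ S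

/-- `i^c_N(x) = 2 ∑_{k=0}^N c^N_k C(N,k) min{k/N, x} − x`. -/
noncomputable def icN (lam : Measure ℝ) (N : ℕ) (x : ℝ) : ℝ :=
  2 * ∑ k ∈ Finset.range (N + 1),
    cNk lam N k * (N.choose k : ℝ) * min ((k : ℝ) / N) x - x

/-- `i^c(x) = 2 ∫ min{t,x} λ(dt) − x`. -/
noncomputable def ic (lam : Measure ℝ) (x : ℝ) : ℝ :=
  2 * ∫ t, min t x ∂lam - x

/-- `‖f‖_{c,N} = ∑_{k=0}^N c^N_k C(N,k) |f(k/N)|`. -/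
noncomputable def cNorm (lam : Measure ℝ) (N : ℕ) (f : ℝ → ℝ) : ℝ :=
  ∑ k ∈ Finset.range (N + 1), cNk lam N k * (N.choose k : ℝ) * |f ((k : ℝ) / N)|

/-- The topological support of a measure on `ℝ`. -/
def mSupport (lam : Measure ℝ) : Set ℝ :=
  {x | ∀ U : Set ℝ, IsOpen U → x ∈ U → lam U ≠ 0}


section Aux
open Finset MeasureTheory

noncomputable def bw (N k : ℕ) (t : ℝ) : ℝ := (N.choose k : ℝ) * t ^ k * (1 - t) ^ (N - k)

lemma bw_eval (N k : ℕ) (t : ℝ) :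
    Polynomial.eval t (bernsteinPolynomial ℝ N k) = bw N k t := by
  simp [bernsteinPolynomial, bw]

lemma bw_sum (N : ℕ) (t : ℝ) : ∑ k ∈ range (N + 1), bw N k t = 1 := by
  have := congrArg (Polynomial.eval t) (bernsteinPolynomial.sum ℝ N)
  simpa [Polynomial.eval_finset_sum, bw_eval] using this

lemma bw_mean (N : ℕ) (t : ℝ) :
    ∑ k ∈ range (N + 1), (k : ℝ) * bw N k t = N * t := by
  have := congrArg (Polynomial.eval t) (bernsteinPolynomial.sum_smul ℝ N)
  simpa [Polynomial.eval_finset_sum, bw_eval, nsmul_eq_mul] using this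

lemma bw_var (N : ℕ) (t : ℝ) :
    ∑ k ∈ range (N + 1), ((N : ℝ) * t - k) ^ 2 * bw N k t = N * t * (1 - t) := by
  have := congrArg (Polynomial.eval t) (bernsteinPolynomial.variance ℝ N)
  simpa [Polynomial.eval_finset_sum, bw_eval, nsmul_eq_mul] using this

lemma bw_nonneg {N k : ℕ} {t : ℝ} (ht : t ∈ Set.Icc (0:ℝ) 1) : 0 ≤ bw N k t := by
  obtain ⟨h0, h1⟩ := ht
  exact mul_nonneg (mul_nonneg (Nat.cast_nonneg _) (pow_nonneg h0 _))
    (pow_nonneg (by linarith) _)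

lemma bw_mad (N : ℕ) (hN : 1 ≤ N) {t : ℝ} (ht : t ∈ Set.Icc (0:ℝ) 1) :
    ∑ k ∈ range (N + 1), bw N k t * |(k : ℝ) / N - t| ≤ 1 / (2 * Real.sqrt N) := by
  have hNpos : (0:ℝ) < N := by exact_mod_cast hN
  have hsq : (∑ k ∈ range (N + 1), bw N k t * |(k : ℝ) / N - t|) ^ 2
      ≤ ∑ k ∈ range (N + 1), bw N k t * ((k : ℝ) / N - t) ^ 2 := by
    have := Finset.sum_sq_le_sum_mul_sum_of_sq_eq_mul (range (N + 1))
      (r := fun k => bw N k t * |(k : ℝ) / N - t|)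
      (f := fun k => bw N k t)
      (g := fun k => bw N k t * ((k : ℝ) / N - t) ^ 2)
      (fun k _ => bw_nonneg ht)
      (fun k _ => mul_nonneg (bw_nonneg ht) (sq_nonneg _))
      (fun k _ => by rw [mul_pow, sq_abs]; ring)
    simpa [bw_sum N t] using this
  have hvar : ∑ k ∈ range (N + 1), bw N k t * ((k : ℝ) / N - t) ^ 2 = t * (1 - t) / N := by
    have := bw_var N t
    have h2 : ∀ k ∈ range (N + 1), bw N k t * ((k : ℝ) / N - t) ^ 2
        = ((N:ℝ) * t - k) ^ 2 * bw N k t / N ^ 2 := by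
      intro k _
      field_simp
      ring
    rw [Finset.sum_congr rfl h2, ← Finset.sum_div, this]
    field_simp
  have hq : t * (1 - t) / N ≤ 1 / (4 * N) := by
    rw [div_le_div_iff₀ hNpos (by positivity)]
    nlinarith [sq_nonneg (1 - 2 * t)]
  have hnn : 0 ≤ ∑ k ∈ range (N + 1), bw N k t * |(k : ℝ) / N - t| :=
    Finset.sum_nonneg fun k _ => mul_nonneg (bw_nonneg ht) (abs_nonneg _)
  have : (∑ k ∈ range (N + 1), bw N k t * |(k : ℝ) / N - t|) ^ 2 ≤ (1 / (2 * Real.sqrt N)) ^ 2 := by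
    have : (1 / (2 * Real.sqrt N)) ^ 2 = 1 / (4 * N) := by
      rw [div_pow, mul_pow, Real.sq_sqrt hNpos.le]
      norm_num
    rw [this]
    exact hsq.trans (hvar.le.trans hq)
  have hb : (0:ℝ) ≤ 1 / (2 * Real.sqrt N) := by positivity
  calc ∑ k ∈ range (N + 1), bw N k t * |(k : ℝ) / N - t|
      = Real.sqrt ((∑ k ∈ range (N + 1), bw N k t * |(k : ℝ) / N - t|) ^ 2) :=
        (Real.sqrt_sq hnn).symm
    _ ≤ Real.sqrt ((1 / (2 * Real.sqrt N)) ^ 2) := Real.sqrt_le_sqrt this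
    _ = 1 / (2 * Real.sqrt N) := Real.sqrt_sq hb

lemma key_ptwise (N : ℕ) (hN : 1 ≤ N) {t : ℝ} (ht : t ∈ Set.Icc (0:ℝ) 1) (x : ℝ) :
    |∑ k ∈ range (N + 1), bw N k t * min ((k : ℝ) / N) x - min t x| ≤ 1 / (4 * Real.sqrt N) := by
  have hNpos : (0:ℝ) < N := by exact_mod_cast hN
  have hmin : ∀ a : ℝ, min a x = (a + x - |a - x|) / 2 := by
    intro a
    rcases le_total a x with h | h
    · rw [min_eq_left h, abs_of_nonpos (by linarith)]; ring
    · rw [min_eq_right h, abs_of_nonneg (by linarith)]; ring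
  have hmean : ∑ k ∈ range (N + 1), bw N k t * ((k : ℝ) / N) = t := by
    have h := bw_mean N t
    have h2 : ∀ k ∈ range (N + 1), bw N k t * ((k : ℝ) / N) = ((k:ℝ) * bw N k t) / N :=
      fun k _ => by ring
    rw [Finset.sum_congr rfl h2, ← Finset.sum_div, h]
    field_simp
  set A := ∑ k ∈ range (N + 1), bw N k t * |(k : ℝ) / N - x| with hA
  have hexp : ∑ k ∈ range (N + 1), bw N k t * min ((k : ℝ) / N) x = (t + x - A) / 2 := by
    have h2 : ∀ k ∈ range (N + 1), bw N k t * min ((k:ℝ)/N) x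
        = (bw N k t * ((k:ℝ)/N) + bw N k t * x - bw N k t * |(k:ℝ)/N - x|) / 2 :=
      fun k _ => by rw [hmin]; ring
    rw [Finset.sum_congr rfl h2, ← Finset.sum_div, Finset.sum_sub_distrib,
      Finset.sum_add_distrib, hmean, ← Finset.sum_mul, bw_sum]
    ring
  have habs : ∑ k ∈ range (N + 1), bw N k t * (|(k : ℝ) / N - x| - |t - x|) = A - |t - x| := by
    have h2 : ∀ k ∈ range (N + 1), bw N k t * (|(k:ℝ)/N - x| - |t - x|)
        = bw N k t * |(k:ℝ)/N - x| - bw N k t * |t - x| := fun k _ => by ring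
    rw [Finset.sum_congr rfl h2, Finset.sum_sub_distrib, ← Finset.sum_mul, bw_sum, one_mul]
  rw [hexp, hmin t]
  have hAB : |(t + x - A) / 2 - (t + x - |t - x|) / 2| = abs (A - |t - x|) / 2 := by
    rw [show (t + x - A) / 2 - (t + x - |t - x|) / 2 = -((A - |t - x|) / 2) by ring,
      abs_neg, abs_div]
    norm_num
  rw [hAB, ← habs]
  have h1 : |∑ k ∈ range (N + 1), bw N k t * (|(k : ℝ) / N - x| - |t - x|)|
      ≤ ∑ k ∈ range (N + 1), bw N k t * |(k : ℝ) / N - t| := by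
    refine (Finset.abs_sum_le_sum_abs _ _).trans (Finset.sum_le_sum fun k _ => ?_)
    rw [abs_mul, abs_of_nonneg (bw_nonneg ht)]
    refine mul_le_mul_of_nonneg_left ((abs_abs_sub_abs_le_abs_sub _ _).trans ?_) (bw_nonneg ht)
    rw [show (k:ℝ)/N - x - (t - x) = (k:ℝ)/N - t by ring]
  have h2 := bw_mad N hN ht
  have hs : 0 < Real.sqrt N := Real.sqrt_pos.mpr hNpos
  calc |∑ k ∈ range (N + 1), bw N k t * (|(k : ℝ) / N - x| - |t - x|)| / 2
      ≤ (1 / (2 * Real.sqrt N)) / 2 := by linarith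
    _ = 1 / (4 * Real.sqrt N) := by field_simp; ring


lemma bw_le_one {N k : ℕ} (hk : k ∈ Finset.range (N + 1)) {t : ℝ} (ht : t ∈ Set.Icc (0:ℝ) 1) :
    bw N k t ≤ 1 := by
  have := Finset.single_le_sum (f := fun j => bw N j t) (fun j _ => bw_nonneg ht) hk
  rw [bw_sum] at this
  exact this

lemma bw_continuous (N k : ℕ) : Continuous (fun t : ℝ => bw N k t) := by
  unfold bw
  fun_prop

/-- for a non-null intricacy, `|i^c_N(x) − i^c(x)| ≤ 1/(2√N)` for all
`x ∈ [0,1]` and `N ≥ 1`. -/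
theorem stmt8 (lam : Measure ℝ) (hlam : IsIntricacyMeasure lam)
    (x : ℝ) (hx : x ∈ Set.Icc (0:ℝ) 1) (N : ℕ) (hN : 1 ≤ N) :
    |icN lam N x - ic lam x| ≤ 1 / (2 * Real.sqrt N) := by
  obtain ⟨hP, hcarr, _, _⟩ := hlam
  have hae : ∀ᵐ t ∂lam, t ∈ Set.Icc (0:ℝ) 1 := by
    rw [MeasureTheory.ae_iff]
    exact hcarr
  have hNpos : (0:ℝ) < N := by exact_mod_cast hN
  have hs : 0 < Real.sqrt N := Real.sqrt_pos.mpr hNpos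
  set f : ℕ → ℝ → ℝ := fun k t => bw N k t * min ((k : ℝ) / N) x with hf
  have hint : ∀ k ∈ Finset.range (N + 1), Integrable (f k) lam := by
    intro k hk
    refine Integrable.mono' (integrable_const 1)
      (((bw_continuous N k).mul continuous_const).aestronglyMeasurable) ?_
    filter_upwards [hae] with t ht
    have h1 : |min ((k : ℝ) / N) x| ≤ 1 := by
      rw [abs_le]
      constructor
      · have : (0:ℝ) ≤ min ((k : ℝ) / N) x :=
          le_min (div_nonneg (Nat.cast_nonneg _) hNpos.le) hx.1
        linarith
      · exact (min_le_right _ _).trans hx.2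
    calc ‖f k t‖ = |bw N k t| * |min ((k : ℝ) / N) x| := abs_mul _ _
      _ ≤ 1 * 1 := by
          refine mul_le_mul ?_ h1 (abs_nonneg _) zero_le_one
          rw [abs_of_nonneg (bw_nonneg ht)]
          exact bw_le_one hk ht
      _ = 1 := by norm_num
  have hmint : Integrable (fun t => min t x) lam := by
    refine Integrable.mono' (integrable_const 1)
      ((continuous_id.min continuous_const).aestronglyMeasurable) ?_
    filter_upwards [hae] with t ht
    rw [Real.norm_eq_abs, abs_le]
    constructor
    · have : (0:ℝ) ≤ min t x := le_min ht.1 hx.1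
      linarith
    · exact (min_le_right _ _).trans hx.2
  have hsum : ∑ k ∈ Finset.range (N + 1), cNk lam N k * (N.choose k : ℝ) * min ((k : ℝ) / N) x
      = ∫ t, ∑ k ∈ Finset.range (N + 1), f k t ∂lam := by
    rw [integral_finset_sum _ hint]
    refine Finset.sum_congr rfl fun k hk => ?_
    rw [show cNk lam N k * (N.choose k : ℝ) * min ((k : ℝ) / N) x
        = (∫ t, t ^ k * (1 - t) ^ (N - k) ∂lam) * ((N.choose k : ℝ) * min ((k : ℝ) / N) x) by
      rw [cNk]; ring, ← integral_mul_const]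
    refine integral_congr_ae (Filter.Eventually.of_forall fun t => ?_)
    simp only [hf, bw]
    ring
  have hdiff : icN lam N x - ic lam x
      = 2 * ∫ t, (∑ k ∈ Finset.range (N + 1), f k t - min t x) ∂lam := by
    rw [integral_sub (integrable_finset_sum _ hint) hmint, icN, ic, hsum]
    ring
  rw [hdiff, abs_mul]
  have hbound : |∫ t, (∑ k ∈ Finset.range (N + 1), f k t - min t x) ∂lam|
      ≤ 1 / (4 * Real.sqrt N) := by
    have := MeasureTheory.norm_integral_le_of_norm_le_const (μ := lam)
      (f := fun t => ∑ k ∈ Finset.range (N + 1), f k t - min t x)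
      (C := 1 / (4 * Real.sqrt N)) ?_
    · simpa [measure_univ] using this
    · filter_upwards [hae] with t ht
      exact key_ptwise N hN ht x
  calc |(2:ℝ)| * |∫ t, (∑ k ∈ Finset.range (N + 1), f k t - min t x) ∂lam|
      ≤ 2 * (1 / (4 * Real.sqrt N)) := by
        rw [show |(2:ℝ)| = 2 by norm_num]
        linarith
    _ = 1 / (2 * Real.sqrt N) := by field_simp; ring

end Aux
end

section
/- Let I^c be a non-null intricacy with associated symmetric probability measure λ_c on [0,1]. Then: (1) i^c(x) = ∫_{[0,1]} min{x, 1−x, t, 1−t} λ_c(dt) for all x ∈ [0,1]; (2) i^c : [0,1] → [0,1] is concave and 1-Lipschitz; (3) i^c(x) = i^c(1−x) for all x ∈ [0,1]; (4) i^c achieves its maximum over [0,1] at x = 1/2, and i^c(1/2) = ∫_{[0,1]} min{t, 1−t} λ_c(dt). -/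
open Filter

open MeasureTheory

section Stmt9Aux
open MeasureTheory
variable {lam : Measure ℝ}

lemma stmt9_aeIcc (hc : lam (Set.Icc (0:ℝ) 1)ᶜ = 0) : ∀ᵐ t ∂lam, t ∈ Set.Icc (0:ℝ) 1 := by
  rw [MeasureTheory.ae_iff]
  exact hc

lemma stmt9_intg [IsProbabilityMeasure lam] (hc : lam (Set.Icc (0:ℝ) 1)ᶜ = 0)
    (f : ℝ → ℝ) (hf : Measurable f) (hbd : ∀ t ∈ Set.Icc (0:ℝ) 1, |f t| ≤ 1) :
    Integrable f lam := by
  refine (integrable_const (1:ℝ)).mono' hf.aestronglyMeasurable ?_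
  filter_upwards [stmt9_aeIcc hc] with t ht
  simpa using hbd t ht

lemma stmt9_symInt (hsym : Measure.map (fun t : ℝ => 1 - t) lam = lam)
    (f : ℝ → ℝ) (hf : Measurable f) :
    ∫ t, f t ∂lam = ∫ t, f (1 - t) ∂lam := by
  conv_lhs => rw [← hsym]
  rw [integral_map (by fun_prop) hf.aestronglyMeasurable]

lemma stmt9_min_half {x : ℝ} : min x (1 - x) ≤ 1/2 := by
  rcases le_total x (1-x) with h|h
  · rw [min_eq_left h]; linarith
  · rw [min_eq_right h]; linarith

end Stmt9Aux

/-- for a non-null intricacy with representing measure `λ_c`: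
(1) `i^c(x) = ∫ min{x, 1−x, t, 1−t} λ_c(dt)` on `[0,1]`;
(2) `i^c : [0,1] → [0,1]` is concave and 1-Lipschitz;
(3) `i^c(x) = i^c(1−x)`;
(4) `i^c` is maximal at `x = 1/2` with `i^c(1/2) = ∫ min{t, 1−t} λ_c(dt)`. -/
theorem stmt9 (lam : Measure ℝ) (hlam : IsIntricacyMeasure lam) :
    (∀ x ∈ Set.Icc (0:ℝ) 1,
      ic lam x = ∫ t, min (min x (1 - x)) (min t (1 - t)) ∂lam) ∧
    (ConcaveOn ℝ (Set.Icc (0:ℝ) 1) (ic lam) ∧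
      LipschitzOnWith 1 (ic lam) (Set.Icc (0:ℝ) 1) ∧
      Set.MapsTo (ic lam) (Set.Icc (0:ℝ) 1) (Set.Icc (0:ℝ) 1)) ∧
    (∀ x ∈ Set.Icc (0:ℝ) 1, ic lam x = ic lam (1 - x)) ∧
    ((∀ x ∈ Set.Icc (0:ℝ) 1, ic lam x ≤ ic lam (1/2)) ∧
      ic lam (1/2) = ∫ t, min t (1 - t) ∂lam) := by
  obtain ⟨hP, hc, hsym, -⟩ := hlam
  haveI := hP
  have hintg : ∀ x ∈ Set.Icc (0:ℝ) 1,
      Integrable (fun t : ℝ => min (min x (1 - x)) (min t (1 - t))) lam := by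
    intro x hx
    refine stmt9_intg hc _ (by fun_prop) ?_
    rintro t ⟨ht0, ht1⟩
    rw [abs_le]
    constructor
    · have h0 : (0:ℝ) ≤ min (min x (1-x)) (min t (1-t)) :=
        le_min (le_min hx.1 (by linarith [hx.2])) (le_min ht0 (by linarith))
      linarith
    · exact le_trans (min_le_left _ _) (le_trans (min_le_left _ _) hx.2)
  have rep : ∀ x ∈ Set.Icc (0:ℝ) 1,
      ic lam x = ∫ t, min (min x (1 - x)) (min t (1 - t)) ∂lam := by
    intro x hx
    have h1 : Integrable (fun t : ℝ => min t x) lam := by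
      refine stmt9_intg hc _ (by fun_prop) ?_
      rintro t ⟨ht0, ht1⟩
      rw [abs_le]
      exact ⟨by linarith [le_min ht0 hx.1], (min_le_right t x).trans hx.2⟩
    have h2 : Integrable (fun t : ℝ => min (1 - t) x) lam := by
      refine stmt9_intg hc _ (by fun_prop) ?_
      rintro t ⟨ht0, ht1⟩
      rw [abs_le]
      refine ⟨by linarith [le_min (by linarith : (0:ℝ) ≤ 1 - t) hx.1],
        (min_le_right (1-t) x).trans hx.2⟩
    have hadd : Integrable (fun t : ℝ => min t x + min (1 - t) x) lam := h1.add h2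
    have hs : ∫ t, min t x ∂lam = ∫ t, min (1 - t) x ∂lam :=
      stmt9_symInt hsym (fun t => min t x) (by fun_prop)
    have key : ∫ t, (min t x + min (1 - t) x - x) ∂lam
        = (∫ t, min t x ∂lam) + (∫ t, min (1 - t) x ∂lam) - x := by
      rw [integral_sub hadd (integrable_const x), integral_add h1 h2, integral_const]
      simp
    have key2 : ic lam x = ∫ t, (min t x + min (1 - t) x - x) ∂lam := by
      rw [key, ic, hs]; ring
    rw [key2]
    refine integral_congr_ae ?_
    filter_upwards [stmt9_aeIcc hc] with t ht
    obtain ⟨hx0, hx1⟩ := hx; obtain ⟨ht0, ht1⟩ := ht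
    simp only [min_def]; split_ifs <;> linarith
  refine ⟨rep, ⟨?_, ?_, ?_⟩, ?_, ?_, ?_⟩
  · -- concave
    refine ⟨convex_Icc 0 1, ?_⟩
    intro x hx y hy a b ha hb hab
    have hz : a • x + b • y ∈ Set.Icc (0:ℝ) 1 := (convex_Icc 0 1) hx hy ha hb hab
    rw [rep x hx, rep y hy, rep _ hz]
    simp only [smul_eq_mul]
    rw [← integral_const_mul a, ← integral_const_mul b,
      ← integral_add ((hintg x hx).const_mul a) ((hintg y hy).const_mul b)]
    refine integral_mono_ae
      (((hintg x hx).const_mul a).add ((hintg y hy).const_mul b)) (hintg _ hz) ?_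
    filter_upwards with t
    set c := min t (1-t) with hcc
    have h1 : a * min (min x (1-x)) c + b * min (min y (1-y)) c
        ≤ min (a * min x (1-x) + b * min y (1-y)) c := by
      refine le_min ?_ ?_
      · nlinarith [min_le_left (min x (1-x)) c, min_le_left (min y (1-y)) c]
      · have := mul_le_mul_of_nonneg_left (min_le_right (min x (1-x)) c) ha
        have := mul_le_mul_of_nonneg_left (min_le_right (min y (1-y)) c) hb
        have hc' : a * c + b * c = c := by rw [← add_mul, hab, one_mul]
        linarith
    refine le_trans h1 (min_le_min ?_ le_rfl)
    refine le_min ?_ ?_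
    · nlinarith [min_le_left x (1-x), min_le_left y (1-y)]
    · nlinarith [min_le_right x (1-x), min_le_right y (1-y)]
  · -- Lipschitz
    refine LipschitzOnWith.of_dist_le_mul ?_
    intro x hx y hy
    rw [rep x hx, rep y hy]
    simp only [NNReal.coe_one, one_mul, Real.dist_eq]
    rw [← integral_sub (hintg x hx) (hintg y hy)]
    have habs := norm_integral_le_integral_norm (μ := lam)
      (f := fun t => min (min x (1-x)) (min t (1-t)) - min (min y (1-y)) (min t (1-t)))
    simp only [Real.norm_eq_abs] at habs
    refine le_trans habs ?_
    calc ∫ t, |min (min x (1-x)) (min t (1-t)) - min (min y (1-y)) (min t (1-t))| ∂lam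
        ≤ ∫ _t, |x - y| ∂lam := by
          refine integral_mono_ae ((hintg x hx).sub (hintg y hy)).abs (integrable_const _) ?_
          filter_upwards with t
          calc |min (min x (1-x)) (min t (1-t)) - min (min y (1-y)) (min t (1-t))|
              ≤ max |min x (1-x) - min y (1-y)| |min t (1-t) - min t (1-t)| :=
                abs_min_sub_min_le_max _ _ _ _
            _ = |min x (1-x) - min y (1-y)| := by simp
            _ ≤ max |x - y| |(1-x) - (1-y)| := abs_min_sub_min_le_max _ _ _ _
            _ = |x - y| := by rw [show (1-x) - (1-y) = -(x-y) by ring, abs_neg, max_self]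
      _ = |x - y| := by simp
  · -- maps to [0,1]
    intro x hx
    rw [Set.mem_Icc, rep x hx]
    constructor
    · refine integral_nonneg_of_ae ?_
      filter_upwards [stmt9_aeIcc hc] with t ht
      obtain ⟨ht0, ht1⟩ := ht
      simp only [Pi.zero_apply]
      exact le_min (le_min hx.1 (by linarith [hx.2])) (le_min ht0 (by linarith))
    · calc ∫ t, min (min x (1-x)) (min t (1-t)) ∂lam ≤ ∫ _t, (1:ℝ) ∂lam := by
            refine integral_mono_ae (hintg x hx) (integrable_const 1) ?_
            filter_upwards with t
            exact le_trans (min_le_left _ _) (le_trans (min_le_left _ _) hx.2)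
        _ = 1 := by simp
  · -- symmetry
    intro x hx
    have hx' : 1 - x ∈ Set.Icc (0:ℝ) 1 := ⟨by linarith [hx.2], by linarith [hx.1]⟩
    rw [rep x hx, rep _ hx']
    congr 1
    ext t
    rw [show (1 : ℝ) - (1 - x) = x by ring, min_comm (1-x) x]
  · -- maximal at 1/2
    intro x hx
    have h2 : (1/2 : ℝ) ∈ Set.Icc (0:ℝ) 1 := by norm_num
    rw [rep x hx, rep _ h2]
    refine integral_mono_ae (hintg x hx) (hintg _ h2) ?_
    filter_upwards with t
    refine min_le_min ?_ le_rfl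
    rw [show (1:ℝ) - 1/2 = 1/2 by norm_num, min_self]
    exact stmt9_min_half
  · -- value at 1/2
    have h2 : (1/2 : ℝ) ∈ Set.Icc (0:ℝ) 1 := by norm_num
    rw [rep _ h2]
    refine integral_congr_ae ?_
    filter_upwards [stmt9_aeIcc hc] with t ht
    obtain ⟨ht0, ht1⟩ := ht
    have hm : min t (1-t) ≤ 1/2 := by
      rcases le_total t (1-t) with h|h
      · rw [min_eq_left h]; linarith
      · rw [min_eq_right h]; linarith
    rw [show min (1/2 : ℝ) (1 - 1/2) = 1/2 by norm_num, min_eq_right hm]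
end

section
/- Let I^c be a non-null intricacy with associated symmetric probability measure λ_c on [0,1]. Then x = 1/2 is the unique maximum point of i^c on [0,1] if and only if 1/2 belongs to the topological support of λ_c; equivalently, for every x ∈ [0,1] with x ≠ 1/2 one has i^c(x) < i^c(1/2) if and only if λ_c((min{x,1−x}, max{x,1−x})) > 0. -/
open Filter

open MeasureTheory

section Aux

lemma aux_integrable (lam : Measure ℝ) [IsProbabilityMeasure lam]
    (hcc : lam (Set.Icc (0:ℝ) 1)ᶜ = 0)
    {f : ℝ → ℝ} (hf : Continuous f) (hC : ∀ t ∈ Set.Icc (0:ℝ) 1, |f t| ≤ 1) :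
    Integrable f lam := by
  refine (integrable_const (1:ℝ)).mono' hf.aestronglyMeasurable ?_
  filter_upwards [mem_ae_iff.2 hcc] with t ht
  simpa [Real.norm_eq_abs] using hC t ht

lemma aux_symm (lam : Measure ℝ)
    (hsym : Measure.map (fun t : ℝ => 1 - t) lam = lam)
    {f : ℝ → ℝ} (hf : Continuous f) :
    ∫ t, f (1 - t) ∂lam = ∫ t, f t ∂lam := by
  have hm : AEMeasurable (fun t : ℝ => 1 - t) lam :=
    (measurable_const.sub measurable_id).aemeasurable
  conv_rhs => rw [← hsym]
  rw [integral_map hm hf.aestronglyMeasurable]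

lemma aux_double (lam : Measure ℝ) [IsProbabilityMeasure lam]
    (hcc : lam (Set.Icc (0:ℝ) 1)ᶜ = 0)
    (hsym : Measure.map (fun t : ℝ => 1 - t) lam = lam)
    {f : ℝ → ℝ} (hf : Continuous f) (hC : ∀ t ∈ Set.Icc (0:ℝ) 1, |f t| ≤ 1) :
    2 * ∫ t, f t ∂lam = ∫ t, (f t + f (1 - t)) ∂lam := by
  have h1 := aux_integrable lam hcc hf hC
  have h2 : Integrable (fun t => f (1 - t)) lam :=
    aux_integrable lam hcc (hf.comp (continuous_const.sub continuous_id))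
      (fun t ht => hC (1 - t) ⟨by linarith [ht.2], by linarith [ht.1]⟩)
  rw [integral_add h1 h2, aux_symm lam hsym hf]; ring

set_option maxHeartbeats 1000000 in
lemma aux_keyA (lam : Measure ℝ) [IsProbabilityMeasure lam]
    (hcc : lam (Set.Icc (0:ℝ) 1)ᶜ = 0)
    (hsym : Measure.map (fun t : ℝ => 1 - t) lam = lam)
    {x : ℝ} (hx0 : 0 ≤ x) (hx : x ≤ 1/2) :
    ic lam (1/2) - ic lam x = ∫ t, max 0 (min t (1 - t) - x) ∂lam := by
  have i1 : Integrable (fun t : ℝ => min t (1/2)) lam :=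
    aux_integrable lam hcc (continuous_id.min continuous_const)
      (fun t ht => by rw [abs_le]; constructor <;> simp only [min_def] <;> split_ifs <;> linarith [ht.1, ht.2])
  have i2 : Integrable (fun t : ℝ => min t x) lam :=
    aux_integrable lam hcc (continuous_id.min continuous_const)
      (fun t ht => by rw [abs_le]; constructor <;> simp only [min_def] <;> split_ifs <;> linarith [ht.1, ht.2])
  have hf : Continuous (fun t : ℝ => min t (1/2) - min t x) :=
    (continuous_id.min continuous_const).sub (continuous_id.min continuous_const)
  have hC : ∀ t ∈ Set.Icc (0:ℝ) 1, |min t (1/2) - min t x| ≤ 1 := by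
    intro t ht
    rw [abs_le]; constructor <;> simp only [min_def] <;> split_ifs <;> linarith [ht.1, ht.2]
  have hd := aux_double lam hcc hsym hf hC
  have hpt : (fun t : ℝ => (min t (1/2) - min t x) + (min (1-t) (1/2) - min (1-t) x))
      = fun t : ℝ => max 0 (min t (1-t) - x) + (1/2 - x) := by
    funext t
    simp only [min_def, max_def]
    split_ifs <;> linarith
  have hint : Integrable (fun t : ℝ => max 0 (min t (1-t) - x)) lam :=
    aux_integrable lam hcc
      (continuous_const.max ((continuous_id.min (continuous_const.sub continuous_id)).sub
        continuous_const))
      (fun t ht => by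
        rw [abs_le]; constructor <;> simp only [min_def, max_def] <;> split_ifs <;>
          linarith [ht.1, ht.2])
  have e1 : ic lam (1/2) - ic lam x
      = 2 * ∫ t, (min t (1/2) - min t x) ∂lam - (1/2 - x) := by
    unfold ic; rw [integral_sub i1 i2]; ring
  rw [e1, hd, hpt, integral_add hint (integrable_const _), integral_const]
  simp [measure_univ]

set_option maxHeartbeats 1000000 in
lemma aux_icsymm (lam : Measure ℝ) [IsProbabilityMeasure lam]
    (hcc : lam (Set.Icc (0:ℝ) 1)ᶜ = 0)
    (hsym : Measure.map (fun t : ℝ => 1 - t) lam = lam)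
    {x : ℝ} (hx : 1/2 ≤ x) (hx1 : x ≤ 1) :
    ic lam x = ic lam (1 - x) := by
  have i1 : Integrable (fun t : ℝ => min t x) lam :=
    aux_integrable lam hcc (continuous_id.min continuous_const)
      (fun t ht => by rw [abs_le]; constructor <;> simp only [min_def] <;> split_ifs <;>
        linarith [ht.1, ht.2])
  have i2 : Integrable (fun t : ℝ => min t (1-x)) lam :=
    aux_integrable lam hcc (continuous_id.min continuous_const)
      (fun t ht => by rw [abs_le]; constructor <;> simp only [min_def] <;> split_ifs <;>
        linarith [ht.1, ht.2])
  have hf : Continuous (fun t : ℝ => min t x - min t (1-x)) :=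
    (continuous_id.min continuous_const).sub (continuous_id.min continuous_const)
  have hC : ∀ t ∈ Set.Icc (0:ℝ) 1, |min t x - min t (1-x)| ≤ 1 := by
    intro t ht
    rw [abs_le]; constructor <;> simp only [min_def] <;> split_ifs <;> linarith [ht.1, ht.2]
  have hd := aux_double lam hcc hsym hf hC
  have e2 : ∫ t, ((min t x - min t (1-x)) + (min (1-t) x - min (1-t) (1-x))) ∂lam
      = 2*x - 1 := by
    rw [integral_congr_ae (g := fun _ : ℝ => 2*x - 1) ?_]
    · simp [integral_const, measure_univ]
    · filter_upwards [mem_ae_iff.2 hcc] with t ht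
      obtain ⟨ht0, ht1⟩ := ht
      simp only [min_def]
      split_ifs <;> linarith
  have e1 : ic lam x - ic lam (1-x)
      = 2 * ∫ t, (min t x - min t (1-x)) ∂lam - (2*x - 1) := by
    unfold ic; rw [integral_sub i1 i2]; ring
  have : ic lam x - ic lam (1-x) = 0 := by rw [e1, hd, e2]; ring
  linarith

set_option maxHeartbeats 1000000 in
lemma aux_main (lam : Measure ℝ) [IsProbabilityMeasure lam]
    (hcc : lam (Set.Icc (0:ℝ) 1)ᶜ = 0)
    (hsym : Measure.map (fun t : ℝ => 1 - t) lam = lam)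
    {x : ℝ} (hx0 : 0 ≤ x) (hx : x < 1/2) :
    (ic lam x < ic lam (1/2) ↔ 0 < lam (Set.Ioo x (1 - x))) := by
  have hint : Integrable (fun t : ℝ => max 0 (min t (1-t) - x)) lam :=
    aux_integrable lam hcc
      (continuous_const.max ((continuous_id.min (continuous_const.sub continuous_id)).sub
        continuous_const))
      (fun t ht => by
        rw [abs_le]; constructor <;> simp only [min_def, max_def] <;> split_ifs <;>
          linarith [ht.1, ht.2])
  have hposiff := integral_pos_iff_support_of_nonneg
    (f := fun t : ℝ => max 0 (min t (1-t) - x)) (fun t => le_max_left _ _) hint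
  rw [← sub_pos, aux_keyA lam hcc hsym hx0 hx.le, hposiff]
  have hsupp : Function.support (fun t : ℝ => max 0 (min t (1-t) - x))
      = Set.Ioo x (1-x) := by
    ext t
    have hiff : max 0 (min t (1-t) - x) ≠ 0 ↔ 0 < min t (1-t) - x := by
      rcases le_or_gt (min t (1-t) - x) 0 with h | h
      · simp [max_eq_left h, not_lt.mpr h]
      · simp [max_eq_right h.le, h, h.ne']
    simp only [Function.mem_support, Set.mem_Ioo, hiff, sub_pos, lt_min_iff]
    constructor <;> rintro ⟨h1, h2⟩ <;> exact ⟨h1, by linarith⟩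
  rw [hsupp]

end Aux

/-- `x = 1/2` is the unique maximum point of `i^c` on `[0,1]` iff `1/2` belongs
to the topological support of `λ_c`; equivalently, for `x ≠ 1/2` in `[0,1]`,
`i^c(x) < i^c(1/2)` iff `λ_c((min{x,1−x}, max{x,1−x})) > 0`. -/

theorem stmt10 (lam : Measure ℝ) (hlam : IsIntricacyMeasure lam) :
    ((∀ x ∈ Set.Icc (0:ℝ) 1, x ≠ 1/2 → ic lam x < ic lam (1/2)) ↔
      (1/2 : ℝ) ∈ mSupport lam) ∧
    (∀ x ∈ Set.Icc (0:ℝ) 1, x ≠ 1/2 →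
      (ic lam x < ic lam (1/2) ↔
        0 < lam (Set.Ioo (min x (1 - x)) (max x (1 - x)))))  := by
  obtain ⟨hprob, hcc, hsym, hpos⟩ := hlam
  haveI := hprob
  have main : ∀ x ∈ Set.Icc (0:ℝ) 1, x ≠ 1/2 →
      (ic lam x < ic lam (1/2) ↔ 0 < lam (Set.Ioo (min x (1-x)) (max x (1-x)))) := by
    intro x hx hne
    rcases lt_or_gt_of_ne hne with h | h
    · rw [min_eq_left (by linarith), max_eq_right (by linarith)]
      exact aux_main lam hcc hsym hx.1 h
    · rw [min_eq_right (by linarith), max_eq_left (by linarith),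
        aux_icsymm lam hcc hsym h.le hx.2]
      have := aux_main lam hcc hsym (x := 1-x) (by linarith [hx.2]) (by linarith)
      simpa using this
  refine ⟨⟨?_, ?_⟩, main⟩
  · intro hall
    simp only [mSupport, Set.mem_setOf_eq]
    intro U hU hU2
    rcases Metric.isOpen_iff.1 hU _ hU2 with ⟨ε, hε, hball⟩
    set δ : ℝ := min ε (1/2) with hδdef
    have hδ0 : 0 < δ := lt_min hε (by norm_num)
    have hδε : δ ≤ ε := min_le_left _ _
    have hδ2 : δ ≤ 1/2 := min_le_right _ _
    set x : ℝ := 1/2 - δ/2 with hxdef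
    have hx1 : x ∈ Set.Icc (0:ℝ) 1 := ⟨by simp only [hxdef]; linarith, by simp only [hxdef]; linarith⟩
    have hne : x ≠ 1/2 := by simp only [hxdef]; intro hcon; linarith [sub_eq_self.mp hcon ▸ hδ0]
    have h2 := (main x hx1 hne).1 (hall x hx1 hne)
    rw [min_eq_left (by simp only [hxdef]; linarith), max_eq_right (by simp only [hxdef]; linarith)] at h2
    have hsub : Set.Ioo x (1 - x) ⊆ U := by
      intro t ht
      apply hball
      rw [Metric.mem_ball, Real.dist_eq]
      have h1 := ht.1
      have h3 := ht.2
      rw [hxdef] at h1 h3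
      exact abs_lt.2 ⟨by linarith, by linarith⟩
    exact (lt_of_lt_of_le h2 (measure_mono hsub)).ne'
  · intro hsupp x hx hne
    rw [main x hx hne]
    have hmem : (1/2:ℝ) ∈ Set.Ioo (min x (1-x)) (max x (1-x)) := by
      rcases lt_or_gt_of_ne hne with h | h
      · rw [min_eq_left (by linarith), max_eq_right (by linarith)]
        exact ⟨h, by linarith⟩
      · rw [min_eq_right (by linarith), max_eq_left (by linarith)]
        exact ⟨by linarith, h⟩
    exact pos_iff_ne_zero.2 (hsupp _ isOpen_Ioo hmem)
end
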